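/- arXiv:1504.04599 — 8 statements merged into one kernel-verified Lean document; each statement's English description precedes it below -/
import Mathlib

section
/- Let X ~ Poisson(m₁ p) and Y ~ Poisson(m₂ q) be independent, and let W = (m₂ X - m₁ Y)² - (m₂² X + m₁² Y). Then Var[W] = 2 m₁² m₂² z² + 4 m₁³ m₂³ z (p - q)², where z = m₂ p + m₁ q. -/
open scoped BigOperators
open Real

/-- Poisson pmf with rate `lam` at `k`. -/
noncomputable def pp (lam : ℝ) (k : ℕ) : ℝ := Real.exp (-lam) * lam ^ k / (Nat.factorial k)

lemma summable_pp (lam : ℝ) : Summable (pp lam) := by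
  have := (Real.summable_pow_div_factorial lam).mul_left (Real.exp (-lam))
  refine this.congr fun n => ?_
  simp [pp, mul_div_assoc]

lemma tsum_pp (lam : ℝ) : ∑' k, pp lam k = 1 := by
  have h : ∑' k : ℕ, lam ^ k / (Nat.factorial k) = Real.exp lam := by
    rw [Real.exp_eq_exp_ℝ, NormedSpace.exp_eq_tsum_div]
  calc ∑' k, pp lam k = Real.exp (-lam) * ∑' k : ℕ, lam ^ k / (Nat.factorial k) := by
        rw [← tsum_mul_left]; exact tsum_congr fun n => by simp [pp, mul_div_assoc]
    _ = 1 := by rw [h, ← Real.exp_add]; simp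

lemma pp_shift (lam : ℝ) (r n : ℕ) :
    pp lam (n + r) * ((n + r).descFactorial r : ℝ) = lam ^ r * pp lam n := by
  have h : ((Nat.factorial n : ℕ) : ℝ) * ((n + r).descFactorial r : ℝ) = ((Nat.factorial (n+r) : ℕ) : ℝ) := by
    rw [← Nat.cast_mul]
    have := Nat.factorial_mul_descFactorial (Nat.le_add_left r n)
    rw [Nat.add_sub_cancel] at this
    rw [this]
  have hf : ((Nat.factorial (n+r) : ℕ) : ℝ) ≠ 0 := Nat.cast_ne_zero.2 (Nat.factorial_ne_zero _)
  have hf2 : ((Nat.factorial n : ℕ) : ℝ) ≠ 0 := Nat.cast_ne_zero.2 (Nat.factorial_ne_zero _)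
  unfold pp
  field_simp
  linear_combination (lam ^ (n + r)) * h

lemma summable_pp_desc (lam : ℝ) (r : ℕ) :
    Summable (fun k : ℕ => pp lam k * (k.descFactorial r : ℝ)) := by
  rw [← summable_nat_add_iff r]
  simpa [pp_shift] using (summable_pp lam).mul_left (lam ^ r)

lemma tsum_pp_desc (lam : ℝ) (r : ℕ) :
    ∑' k : ℕ, pp lam k * (k.descFactorial r : ℝ) = lam ^ r := by
  have hs := summable_pp_desc lam r
  rw [← Summable.sum_add_tsum_nat_add r hs]
  have h1 : ∑ i ∈ Finset.range r, pp lam i * (i.descFactorial r : ℝ) = 0 :=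
    Finset.sum_eq_zero fun i hi => by
      simp [Nat.descFactorial_eq_zero_iff_lt.2 (Finset.mem_range.1 hi)]
  rw [h1, zero_add]
  simp only [pp_shift]
  rw [tsum_mul_left, tsum_pp, mul_one]

lemma cast_d2 (k : ℕ) : ((k.descFactorial 2 : ℕ) : ℝ) = (k : ℝ)^2 - k := by
  cases k with
  | zero => simp
  | succ n =>
    rw [Nat.succ_descFactorial_succ, Nat.descFactorial_one]
    push_cast; ring

lemma cast_d3 (k : ℕ) : ((k.descFactorial 3 : ℕ) : ℝ) = (k : ℝ)^3 - 3*(k:ℝ)^2 + 2*k := by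
  cases k with
  | zero => simp
  | succ n =>
    rw [Nat.succ_descFactorial_succ, Nat.cast_mul, cast_d2]
    push_cast; ring

lemma cast_d4 (k : ℕ) : ((k.descFactorial 4 : ℕ) : ℝ) = (k : ℝ)^4 - 6*(k:ℝ)^3 + 11*(k:ℝ)^2 - 6*k := by
  cases k with
  | zero => simp
  | succ n =>
    rw [Nat.succ_descFactorial_succ, Nat.cast_mul, cast_d3]
    push_cast; ring

lemma tsum_pp_poly (lam : ℝ) (c0 c1 c2 c3 c4 : ℝ) :
    ∑' k : ℕ, pp lam k * (c0 + c1*(k:ℝ) + c2*(k:ℝ)^2 + c3*(k:ℝ)^3 + c4*(k:ℝ)^4)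
      = c0 + c1*lam + c2*(lam^2+lam) + c3*(lam^3+3*lam^2+lam)
        + c4*(lam^4+6*lam^3+7*lam^2+lam) := by
  have h : ∀ k : ℕ, pp lam k * (c0 + c1*(k:ℝ) + c2*(k:ℝ)^2 + c3*(k:ℝ)^3 + c4*(k:ℝ)^4)
      = c0 * (pp lam k * (k.descFactorial 0 : ℝ))
        + (c1+c2+c3+c4) * (pp lam k * (k.descFactorial 1 : ℝ))
        + (c2+3*c3+7*c4) * (pp lam k * (k.descFactorial 2 : ℝ))
        + (c3+6*c4) * (pp lam k * (k.descFactorial 3 : ℝ))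
        + c4 * (pp lam k * (k.descFactorial 4 : ℝ)) := fun k => by
    rw [Nat.descFactorial_zero, Nat.descFactorial_one, cast_d2, cast_d3, cast_d4]
    push_cast; ring
  have H : ∀ r : ℕ, HasSum (fun k : ℕ => pp lam k * (k.descFactorial r : ℝ)) (lam ^ r) :=
    fun r => (tsum_pp_desc lam r) ▸ (summable_pp_desc lam r).hasSum
  have Htot := ((((((H 0).mul_left c0).add ((H 1).mul_left (c1+c2+c3+c4))).add
      ((H 2).mul_left (c2+3*c3+7*c4))).add ((H 3).mul_left (c3+6*c4))).add
      ((H 4).mul_left c4))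
  rw [tsum_congr h, Htot.tsum_eq]
  ring

theorem stmt_3 (m₁ m₂ p q : ℝ) (hm₁ : 0 < m₁) (hm₂ : 0 < m₂)
    (hp : 0 ≤ p) (hq : 0 ≤ q) :
    (∑' k : ℕ, ∑' l : ℕ, pp (m₁ * p) k * pp (m₂ * q) l *
        ((m₂ * k - m₁ * l) ^ 2 - (m₂ ^ 2 * k + m₁ ^ 2 * l)) ^ 2) -
      (∑' k : ℕ, ∑' l : ℕ, pp (m₁ * p) k * pp (m₂ * q) l *
        ((m₂ * k - m₁ * l) ^ 2 - (m₂ ^ 2 * k + m₁ ^ 2 * l))) ^ 2 =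
    2 * m₁ ^ 2 * m₂ ^ 2 * (m₂ * p + m₁ * q) ^ 2 +
      4 * m₁ ^ 3 * m₂ ^ 3 * (m₂ * p + m₁ * q) * (p - q) ^ 2 := by
  have hin2 : ∀ k : ℕ, (∑' l : ℕ, pp (m₁ * p) k * pp (m₂ * q) l *
        ((m₂ * k - m₁ * l) ^ 2 - (m₂ ^ 2 * k + m₁ ^ 2 * l)) ^ 2)
      = pp (m₁ * p) k * ((2*m₁^4*m₂^2*q^2 + 4*m₁^4*m₂^3*q^3 + m₁^4*m₂^4*q^4)
          + (-2*m₁^2*m₂^4*q^2 - 8*m₁^3*m₂^3*q^2 - 4*m₁^3*m₂^4*q^3)*(k:ℝ)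
          + (m₂^4 + 4*m₁*m₂^4*q + 4*m₁^2*m₂^3*q + 6*m₁^2*m₂^4*q^2)*(k:ℝ)^2
          + (-2*m₂^4 - 4*m₁*m₂^4*q)*(k:ℝ)^3 + m₂^4*(k:ℝ)^4) := by
    intro k
    have hl : ∀ l : ℕ, pp (m₁ * p) k * pp (m₂ * q) l *
          ((m₂ * k - m₁ * l) ^ 2 - (m₂ ^ 2 * k + m₁ ^ 2 * l)) ^ 2
        = pp (m₁ * p) k * (pp (m₂ * q) l *
            ((m₂^4*(k:ℝ)^2 - 2*m₂^4*(k:ℝ)^3 + m₂^4*(k:ℝ)^4)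
              + (4*m₁*m₂^3*(k:ℝ)^2 - 4*m₁*m₂^3*(k:ℝ)^3 + 2*m₁^2*m₂^2*(k:ℝ) - 2*m₁^2*m₂^2*(k:ℝ)^2)*(l:ℝ)
              + (-2*m₁^2*m₂^2*(k:ℝ) + 6*m₁^2*m₂^2*(k:ℝ)^2 + 4*m₁^3*m₂*(k:ℝ) + m₁^4)*(l:ℝ)^2
              + (-4*m₁^3*m₂*(k:ℝ) - 2*m₁^4)*(l:ℝ)^3 + m₁^4*(l:ℝ)^4)) := fun l => by ring
    rw [tsum_congr hl, tsum_mul_left, tsum_pp_poly]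
    ring
  have hin1 : ∀ k : ℕ, (∑' l : ℕ, pp (m₁ * p) k * pp (m₂ * q) l *
        ((m₂ * k - m₁ * l) ^ 2 - (m₂ ^ 2 * k + m₁ ^ 2 * l)))
      = pp (m₁ * p) k * ((m₁^2*m₂^2*q^2)
          + (-m₂^2 - 2*m₁*m₂^2*q)*(k:ℝ)
          + m₂^2*(k:ℝ)^2 + (0:ℝ)*(k:ℝ)^3 + (0:ℝ)*(k:ℝ)^4) := by
    intro k
    have hl : ∀ l : ℕ, pp (m₁ * p) k * pp (m₂ * q) l *
          ((m₂ * k - m₁ * l) ^ 2 - (m₂ ^ 2 * k + m₁ ^ 2 * l))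
        = pp (m₁ * p) k * (pp (m₂ * q) l *
            ((-(m₂^2)*(k:ℝ) + m₂^2*(k:ℝ)^2)
              + (-2*m₁*m₂*(k:ℝ) - m₁^2)*(l:ℝ)
              + m₁^2*(l:ℝ)^2 + (0:ℝ)*(l:ℝ)^3 + (0:ℝ)*(l:ℝ)^4)) := fun l => by ring
    rw [tsum_congr hl, tsum_mul_left, tsum_pp_poly]
    ring
  rw [tsum_congr hin2, tsum_pp_poly, tsum_congr hin1, tsum_pp_poly]
  ring
end

section
/- Let p = (p₁,…,p_n) and q = (q₁,…,q_n) be probability vectors, m₁, m₂ > 0, and for each i let X_i ~ Poisson(m₁ p_i), Y_i ~ Poisson(m₂ q_i) be mutually independent. Let V_A = Σ_{i∈A} |X_i/m₁ - Y_i/m₂| for A ⊆ [n]. Then Var[V_A] ≤ 1/m₁ + 1/m₂. -/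
open scoped BigOperators
open MeasureTheory ProbabilityTheory

open scoped NNReal ENNReal
open Real

lemma hasSum_poisson_mul (r : ℝ≥0) :
    HasSum (fun (n : ℕ) => (n : ℝ) * poissonPMFReal r n) r := by
  have h0 : (fun (n : ℕ) => (n : ℝ) * poissonPMFReal r n) 0 = 0 := by simp
  have key : ∀ n : ℕ, ((n+1 : ℕ) : ℝ) * poissonPMFReal r (n+1) = (r:ℝ) * poissonPMFReal r n := by
    intro n
    simp only [poissonPMFReal, Nat.factorial_succ]
    push_cast
    have h1 : (n:ℝ) + 1 ≠ 0 := by positivity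
    have h2 : (n.factorial : ℝ) ≠ 0 := Nat.cast_ne_zero.mpr n.factorial_ne_zero
    field_simp
    ring
  have h1 : HasSum (fun n => ((n+1 : ℕ) : ℝ) * poissonPMFReal r (n+1)) r := by
    simp_rw [key]
    simpa [poissonPMFReal] using (poissonPMFRealSum r).mul_left (r:ℝ)
  have := (hasSum_nat_add_iff (f := fun (n : ℕ) => (n : ℝ) * poissonPMFReal r n) 1).mp (by simpa using h1)
  simpa using this

lemma hasSum_poisson_sq_mul (r : ℝ≥0) :
    HasSum (fun (n : ℕ) => (n : ℝ)^2 * poissonPMFReal r n) ((r:ℝ) + (r:ℝ)^2) := by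
  have key : ∀ n : ℕ, ((n+1 : ℕ) : ℝ)^2 * poissonPMFReal r (n+1)
      = (r:ℝ) * ((n:ℝ) * poissonPMFReal r n) + (r:ℝ) * poissonPMFReal r n := by
    intro n
    simp only [poissonPMFReal, Nat.factorial_succ]
    push_cast
    have h1 : (n:ℝ) + 1 ≠ 0 := by positivity
    have h2 : (n.factorial : ℝ) ≠ 0 := Nat.cast_ne_zero.mpr n.factorial_ne_zero
    field_simp
    ring
  have h1 : HasSum (fun n => ((n+1 : ℕ) : ℝ)^2 * poissonPMFReal r (n+1)) ((r:ℝ)^2 + (r:ℝ)) := by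
    simp_rw [key]
    have := ((hasSum_poisson_mul r).mul_left (r:ℝ)).add ((poissonPMFRealSum r).mul_left (r:ℝ))
    simpa [sq, mul_assoc, poissonPMFReal] using this
  have := (hasSum_nat_add_iff (f := fun (n : ℕ) => (n : ℝ)^2 * poissonPMFReal r n) 1).mp
    (by simpa using h1)
  simpa [add_comm] using this

lemma poisson_pmf_apply (r : ℝ≥0) (n : ℕ) :
    poissonMeasure r {n} = ENNReal.ofReal (poissonPMFReal r n) := by
  rw [poissonMeasure_singleton]
  rfl

lemma integrable_poisson_of_hasSum (r : ℝ≥0) (f : ℕ → ℝ) (hf : ∀ n, 0 ≤ f n) (c : ℝ)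
    (h : HasSum (fun n => f n * poissonPMFReal r n) c) :
    Integrable f (poissonMeasure r) := by
  refine ⟨measurable_from_top.aestronglyMeasurable, ?_⟩
  have hlt : (∫⁻ n, (‖f n‖₊ : ℝ≥0∞) ∂(poissonMeasure r)) < ⊤ := by
    rw [lintegral_countable']
    have heq : ∀ n : ℕ, (‖f n‖₊ : ℝ≥0∞) * poissonMeasure r {n}
        = ENNReal.ofReal (f n * poissonPMFReal r n) := by
      intro n
      rw [poisson_pmf_apply, show (‖f n‖₊ : ℝ≥0∞) = ENNReal.ofReal (f n) from Real.enorm_eq_ofReal (hf n), ← ENNReal.ofReal_mul (hf n)]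
    simp_rw [heq]
    rw [← ENNReal.ofReal_tsum_of_nonneg
      (fun n => mul_nonneg (hf n) poissonPMFReal_nonneg) h.summable]
    exact ENNReal.ofReal_lt_top
  exact hlt

lemma integral_poisson_of_hasSum (r : ℝ≥0) (f : ℕ → ℝ) (hf : ∀ n, 0 ≤ f n) (c : ℝ)
    (h : HasSum (fun n => f n * poissonPMFReal r n) c) :
    ∫ n, f n ∂(poissonMeasure r) = c := by
  rw [integral_poissonMeasure' (integrable_poisson_of_hasSum r f hf c h)]
  have heq : ∀ n : ℕ, (rexp (-(r:ℝ)) * (r:ℝ) ^ n / (n.factorial : ℝ)) • f n = f n * poissonPMFReal r n := by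
    intro n
    rw [smul_eq_mul, mul_comm]
    rfl
  rw [tsum_congr heq]
  exact h.tsum_eq

lemma memℒp_poisson_cast (r : ℝ≥0) :
    MemLp (fun n : ℕ => (n : ℝ)) 2 (poissonMeasure r) := by
  rw [memLp_two_iff_integrable_sq measurable_from_top.aestronglyMeasurable]
  exact integrable_poisson_of_hasSum r (fun n => (n:ℝ)^2) (fun n => by positivity) _
    (hasSum_poisson_sq_mul r)

lemma variance_poisson_cast (r : ℝ≥0) :
    variance (fun n : ℕ => (n : ℝ)) (poissonMeasure r) = r := by
  rw [variance_eq_sub (memℒp_poisson_cast r)]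
  have h2 : ((fun n : ℕ => (n : ℝ)) ^ 2) = fun n : ℕ => (n : ℝ)^2 := rfl
  rw [h2, integral_poisson_of_hasSum r _ (fun n => by positivity) _ (hasSum_poisson_sq_mul r),
    integral_poisson_of_hasSum r _ (fun n => by positivity) _ (hasSum_poisson_mul r)]
  ring

lemma variance_map' {α β : Type*} [MeasurableSpace α] [MeasurableSpace β] (μ : Measure α)
    {T : α → β} (hT : Measurable T) {f : β → ℝ} (hf : Measurable f) :
    variance f (μ.map T) = variance (fun a => f (T a)) μ := by
  have hint : (μ.map T)[f] = μ[fun a => f (T a)] :=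
    integral_map hT.aemeasurable hf.aestronglyMeasurable
  rw [variance, variance, evariance, evariance, hint,
    lintegral_map (f := fun ω => ‖f ω - μ[fun a => f (T a)]‖ₑ ^ 2)
      (((hf.sub measurable_const).enorm).pow_const 2) hT]

lemma variance_abs_le {Ω : Type*} [MeasurableSpace Ω] {μ : Measure Ω} [IsProbabilityMeasure μ]
    {X : Ω → ℝ} (hX : MemLp X 2 μ) :
    variance (fun ω => |X ω|) μ ≤ variance X μ := by
  have hXa : MemLp (fun ω => |X ω|) 2 μ := hX.abs
  rw [variance_eq_sub hX, variance_eq_sub hXa]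
  have h1 : μ[(fun ω => |X ω|) ^ 2] = μ[X ^ 2] := by
    apply integral_congr_ae
    filter_upwards with ω
    simp [Pi.pow_apply, sq_abs]
  rw [h1]
  have h2 : |μ[X]| ≤ μ[fun ω => |X ω|] := by
    simpa [Real.norm_eq_abs] using norm_integral_le_integral_norm (μ := μ) X
  have h3 : μ[X] ^ 2 ≤ (μ[fun ω => |X ω|]) ^ 2 := by
    nlinarith [abs_nonneg (μ[X]), sq_abs (μ[X]), le_abs_self (μ[X]), neg_abs_le (μ[X])]
  linarith

lemma indepFun_fst_snd' {α β : Type*} [MeasurableSpace α] [MeasurableSpace β]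
    (μ : Measure α) (ν : Measure β) [IsProbabilityMeasure μ] [IsProbabilityMeasure ν] :
    IndepFun Prod.fst Prod.snd (μ.prod ν) := by
  rw [indepFun_iff_map_prod_eq_prod_map_map measurable_fst.aemeasurable
    measurable_snd.aemeasurable]
  have h : (fun ω : α × β => (ω.1, ω.2)) = id := by funext ω; rfl
  rw [h, Measure.map_id, Measure.map_fst_prod, Measure.map_snd_prod]
  simp

lemma measurePreserving_eval' {ι : Type*} [Fintype ι] {α : ι → Type*}
    [∀ i, MeasurableSpace (α i)] (κ : ∀ i, Measure (α i)) [∀ i, IsProbabilityMeasure (κ i)]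
    (i : ι) : MeasurePreserving (Function.eval i) (Measure.pi κ) (κ i) := by
  classical
  refine ⟨measurable_pi_apply i, ?_⟩
  ext s hs
  rw [Measure.map_apply (measurable_pi_apply i) hs, ← Set.univ_pi_update_univ, Measure.pi_pi]
  rw [Finset.prod_eq_single i (fun j _ hj => by rw [Function.update_of_ne hj]; exact measure_univ)
    (by simp)]
  rw [Function.update_self]

lemma iIndepFun_eval' {ι : Type*} [Fintype ι] {α : ι → Type*}
    [∀ i, MeasurableSpace (α i)] (κ : ∀ i, Measure (α i)) [∀ i, IsProbabilityMeasure (κ i)] :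
    iIndepFun (fun i (x : ∀ j, α j) => x i) (Measure.pi κ) := by
  classical
  rw [iIndepFun_iff_measure_inter_preimage_eq_mul]
  intro S sets hsets
  have h1 : (⋂ i ∈ S, (fun x : ∀ j, α j => x i) ⁻¹' sets i)
      = Set.univ.pi (fun i => if i ∈ S then sets i else Set.univ) := by
    ext x
    simp only [Set.mem_iInter, Set.mem_preimage, Set.mem_pi, Set.mem_univ, true_implies]
    constructor
    · intro h i; by_cases hi : i ∈ S <;> simp [hi, h i]
    · intro h i hi; have := h i; simpa [hi] using this
  rw [h1, Measure.pi_pi]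
  have h2 : ∀ i, κ i (if i ∈ S then sets i else Set.univ) = if i ∈ S then κ i (sets i) else 1 :=
    fun i => by split <;> simp
  simp_rw [h2]
  rw [Finset.prod_ite_mem Finset.univ S (fun i => κ i (sets i)), Finset.univ_inter]
  refine Finset.prod_congr rfl fun i hi => ?_
  rw [← (measurePreserving_eval' κ i).map_eq,
    Measure.map_apply (measurable_pi_apply i) (hsets i hi)]

lemma memℒp_div_fst (r s : ℝ≥0) (m₁ : ℝ) :
    MemLp (fun y : ℕ × ℕ => (y.1 : ℝ) / m₁) 2 ((poissonMeasure r).prod (poissonMeasure s)) := by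
  have hfstMP : MeasurePreserving Prod.fst ((poissonMeasure r).prod (poissonMeasure s))
      (poissonMeasure r) := ⟨measurable_fst, by rw [Measure.map_fst_prod]; simp⟩
  have heq : (fun u : ℕ => (u : ℝ) / m₁) = fun u : ℕ => m₁⁻¹ * u := by
    funext u; rw [div_eq_inv_mul]
  have h1 : MemLp (fun u : ℕ => (u : ℝ) / m₁) 2 (poissonMeasure r) := by
    rw [heq]; exact (memℒp_poisson_cast r).const_mul m₁⁻¹
  exact h1.comp_measurePreserving hfstMP

lemma memℒp_div_snd (r s : ℝ≥0) (m₂ : ℝ) :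
    MemLp (fun y : ℕ × ℕ => (y.2 : ℝ) / m₂) 2 ((poissonMeasure r).prod (poissonMeasure s)) := by
  have hsndMP : MeasurePreserving Prod.snd ((poissonMeasure r).prod (poissonMeasure s))
      (poissonMeasure s) := ⟨measurable_snd, by rw [Measure.map_snd_prod]; simp⟩
  have heq : (fun u : ℕ => (u : ℝ) / m₂) = fun u : ℕ => m₂⁻¹ * u := by
    funext u; rw [div_eq_inv_mul]
  have h1 : MemLp (fun u : ℕ => (u : ℝ) / m₂) 2 (poissonMeasure s) := by
    rw [heq]; exact (memℒp_poisson_cast s).const_mul m₂⁻¹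
  exact h1.comp_measurePreserving hsndMP

lemma memℒp_pair (r s : ℝ≥0) (m₁ m₂ : ℝ) :
    MemLp (fun y : ℕ × ℕ => |(y.1 : ℝ) / m₁ - (y.2 : ℝ) / m₂|) 2
      ((poissonMeasure r).prod (poissonMeasure s)) :=
  ((memℒp_div_fst r s m₁).sub (memℒp_div_snd r s m₂)).abs

lemma variance_pair_le (r s : ℝ≥0) (m₁ m₂ : ℝ) :
    variance (fun y : ℕ × ℕ => |(y.1 : ℝ) / m₁ - (y.2 : ℝ) / m₂|)
      ((poissonMeasure r).prod (poissonMeasure s)) ≤ m₁⁻¹ ^ 2 * r + m₂⁻¹ ^ 2 * s := by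
  set ρ := (poissonMeasure r).prod (poissonMeasure s) with hρ
  have hXm := memℒp_div_fst r s m₁
  have hYm : MemLp (fun y : ℕ × ℕ => -((y.2 : ℝ) / m₂)) 2 ρ := (memℒp_div_snd r s m₂).neg
  have h1 : variance (fun y : ℕ × ℕ => |(y.1 : ℝ) / m₁ - (y.2 : ℝ) / m₂|) ρ
      ≤ variance (fun y : ℕ × ℕ => (y.1 : ℝ) / m₁ - (y.2 : ℝ) / m₂) ρ :=
    variance_abs_le (hXm.sub (memℒp_div_snd r s m₂))
  have hIndep : IndepFun (fun y : ℕ × ℕ => (y.1 : ℝ) / m₁)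
      (fun y : ℕ × ℕ => -((y.2 : ℝ) / m₂)) ρ := by
    exact (indepFun_fst_snd' (poissonMeasure r) (poissonMeasure s)).comp
      (measurable_from_top (f := fun u : ℕ => (u : ℝ) / m₁))
      (measurable_from_top (f := fun v : ℕ => -((v : ℝ) / m₂)))
  have hWeq : (fun y : ℕ × ℕ => (y.1 : ℝ) / m₁ - (y.2 : ℝ) / m₂)
      = (fun y : ℕ × ℕ => (y.1 : ℝ) / m₁) + (fun y : ℕ × ℕ => -((y.2 : ℝ) / m₂)) := by
    funext y; simp [sub_eq_add_neg]
  have hadd := hIndep.variance_add hXm hYm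
  -- variance of first part
  have hfstMP : MeasurePreserving Prod.fst ρ (poissonMeasure r) :=
    ⟨measurable_fst, by rw [hρ, Measure.map_fst_prod]; simp⟩
  have hX : variance (fun y : ℕ × ℕ => (y.1 : ℝ) / m₁) ρ = m₁⁻¹ ^ 2 * r := by
    have h := variance_map' ρ measurable_fst
      (measurable_from_top (f := fun u : ℕ => (u : ℝ) / m₁))
    rw [hfstMP.map_eq] at h
    rw [← h]
    have heq : (fun u : ℕ => (u : ℝ) / m₁) = fun u : ℕ => m₁⁻¹ * u := by
      funext u; rw [div_eq_inv_mul]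
    rw [heq, variance_const_mul, variance_poisson_cast]
  have hsndMP : MeasurePreserving Prod.snd ρ (poissonMeasure s) :=
    ⟨measurable_snd, by rw [hρ, Measure.map_snd_prod]; simp⟩
  have hY : variance (fun y : ℕ × ℕ => -((y.2 : ℝ) / m₂)) ρ = m₂⁻¹ ^ 2 * s := by
    have h := variance_map' ρ measurable_snd
      (measurable_from_top (f := fun v : ℕ => -((v : ℝ) / m₂)))
    rw [hsndMP.map_eq] at h
    rw [← h]
    have heq : (fun v : ℕ => -((v : ℝ) / m₂)) = fun v : ℕ => (-m₂⁻¹) * v := by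
      funext v; rw [div_eq_inv_mul, ← neg_mul]
    rw [heq, variance_const_mul, variance_poisson_cast]
    ring
  calc variance (fun y : ℕ × ℕ => |(y.1 : ℝ) / m₁ - (y.2 : ℝ) / m₂|) ρ
      ≤ variance (fun y : ℕ × ℕ => (y.1 : ℝ) / m₁ - (y.2 : ℝ) / m₂) ρ := h1
    _ = m₁⁻¹ ^ 2 * r + m₂⁻¹ ^ 2 * s := by rw [hWeq, hadd, hX, hY]

theorem stmt_5 (n : ℕ) (p q : Fin n → ℝ) (m₁ m₂ : ℝ) (hm₁ : 0 < m₁) (hm₂ : 0 < m₂)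
    (hp0 : ∀ i, 0 ≤ p i) (hq0 : ∀ i, 0 ≤ q i)
    (hp1 : ∑ i, p i = 1) (hq1 : ∑ i, q i = 1) (A : Finset (Fin n)) :
    ProbabilityTheory.variance
      (fun ω : (Fin n → ℕ) × (Fin n → ℕ) =>
        ∑ i ∈ A, |(ω.1 i : ℝ) / m₁ - (ω.2 i : ℝ) / m₂|)
      ((MeasureTheory.Measure.pi fun i => poissonMeasure (m₁ * p i).toNNReal).prod
        (MeasureTheory.Measure.pi fun i => poissonMeasure (m₂ * q i).toNNReal)) ≤
      1 / m₁ + 1 / m₂ := by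
  classical
  set μ₁ : Fin n → Measure ℕ := fun i => poissonMeasure (m₁ * p i).toNNReal with hμ₁
  set μ₂ : Fin n → Measure ℕ := fun i => poissonMeasure (m₂ * q i).toNNReal with hμ₂
  set κ : Fin n → Measure (ℕ × ℕ) := fun i => (μ₁ i).prod (μ₂ i) with hκ
  have hMP := measurePreserving_arrowProdEquivProdArrow ℕ ℕ (Fin n) μ₁ μ₂
  set e := MeasurableEquiv.arrowProdEquivProdArrow ℕ ℕ (Fin n) with he
  set g : Fin n → ℕ × ℕ → ℝ := fun i y => |(y.1 : ℝ) / m₁ - (y.2 : ℝ) / m₂| with hg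
  have hgm : ∀ i, Measurable (g i) := fun i =>
    (((measurable_from_top.comp measurable_fst).div_const m₁).sub
     ((measurable_from_top.comp measurable_snd).div_const m₂)).abs
  have hVm : Measurable (fun ω : (Fin n → ℕ) × (Fin n → ℕ) =>
      ∑ i ∈ A, |(ω.1 i : ℝ) / m₁ - (ω.2 i : ℝ) / m₂|) := by
    apply Finset.measurable_sum
    intro i _
    exact (((measurable_from_top.comp
        ((measurable_pi_apply i).comp measurable_fst)).div_const m₁).sub
      ((measurable_from_top.comp
        ((measurable_pi_apply i).comp measurable_snd)).div_const m₂)).abs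
  rw [← hMP.map_eq, variance_map' _ e.measurable hVm]
  have hfeq : (fun x : Fin n → ℕ × ℕ =>
      ∑ i ∈ A, |((e x).1 i : ℝ) / m₁ - ((e x).2 i : ℝ) / m₂|)
      = ∑ i ∈ A, (fun x : Fin n → ℕ × ℕ => g i (x i)) := by
    funext x
    rw [Finset.sum_apply]
    rfl
  rw [hfeq]
  have hZmem : ∀ i : Fin n, MemLp (fun x : Fin n → ℕ × ℕ => g i (x i)) 2 (Measure.pi κ) :=
    fun i => (memℒp_pair (m₁ * p i).toNNReal (m₂ * q i).toNNReal m₁ m₂).comp_measurePreserving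
      (measurePreserving_eval' κ i)
  have hind := (iIndepFun_eval' κ).comp g hgm
  rw [IndepFun.variance_sum (fun i _ => hZmem i)
    (fun i _ j _ hij => hind.indepFun hij)]
  have hbound : ∀ i : Fin n,
      variance (fun x : Fin n → ℕ × ℕ => g i (x i)) (Measure.pi κ) ≤ p i / m₁ + q i / m₂ := by
    intro i
    have hmap : Measure.map (fun x : Fin n → ℕ × ℕ => x i) (Measure.pi κ) = κ i :=
      (measurePreserving_eval' κ i).map_eq
    have h := variance_map' (Measure.pi κ) (measurable_pi_apply i) (hgm i)
    rw [hmap] at h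
    rw [← h]
    refine le_trans (variance_pair_le (m₁ * p i).toNNReal (m₂ * q i).toNNReal m₁ m₂) ?_
    rw [Real.coe_toNNReal _ (mul_nonneg hm₁.le (hp0 i)),
      Real.coe_toNNReal _ (mul_nonneg hm₂.le (hq0 i))]
    have e1 : m₁⁻¹ ^ 2 * (m₁ * p i) = p i / m₁ := by
      field_simp
    have e2 : m₂⁻¹ ^ 2 * (m₂ * q i) = q i / m₂ := by
      field_simp
    rw [e1, e2]
  calc ∑ i ∈ A, variance (fun x : Fin n → ℕ × ℕ => g i (x i)) (Measure.pi κ)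
      ≤ ∑ i ∈ A, (p i / m₁ + q i / m₂) := Finset.sum_le_sum fun i _ => hbound i
    _ ≤ ∑ i : Fin n, (p i / m₁ + q i / m₂) := by
        refine Finset.sum_le_sum_of_subset_of_nonneg (Finset.subset_univ A) fun i _ _ =>
          add_nonneg (div_nonneg (hp0 i) hm₁.le) (div_nonneg (hq0 i) hm₂.le)
    _ = 1 / m₁ + 1 / m₂ := by
        rw [Finset.sum_add_distrib, ← Finset.sum_div, ← Finset.sum_div, hp1, hq1]
end

section
/- Let X ~ Poisson(m₁ p) and Y ~ Poisson(m₂ q) be independent with m₁p + m₂q > 0. Conditioned on X + Y = σ, the expectation of (m₂X - m₁Y)² - (m₂²X + m₁²Y) equals σ(σ-1) · (m₁m₂(q - p)/(m₁p + m₂q))². -/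
open scoped BigOperators
open Real

lemma binom_sum0 (a b : ℝ) (n : ℕ) :
    ∑ k ∈ Finset.range (n+1), (n.choose k : ℝ) * a^k * b^(n-k) = (a+b)^n := by
  rw [add_pow]
  exact Finset.sum_congr rfl fun k _ => by ring

lemma binom_sum1 (a b : ℝ) (n : ℕ) :
    ∑ k ∈ Finset.range (n+2), ((n+1).choose k : ℝ) * a^k * b^(n+1-k) * k
      = (n+1) * a * (a+b)^n := by
  rw [Finset.sum_range_succ']
  simp only [Nat.cast_zero, mul_zero, add_zero]
  rw [show ((n:ℝ)+1) * a * (a+b)^n = (n+1) * a * ∑ k ∈ Finset.range (n+1), (n.choose k : ℝ) * a^k * b^(n-k) from by rw [binom_sum0], Finset.mul_sum]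
  refine Finset.sum_congr rfl fun i _ => ?_
  have h : ((n+1).choose (i+1) : ℝ) * (i+1) = (n+1) * n.choose i := by
    exact_mod_cast congrArg (Nat.cast (R := ℝ)) (Nat.add_one_mul_choose_eq n i).symm
  have hb : n + 1 - (i+1) = n - i := by omega
  rw [hb]
  push_cast
  linear_combination (a^(i+1) * b^(n-i)) * h

lemma binom_sum2 (a b : ℝ) (n : ℕ) :
    ∑ k ∈ Finset.range (n+3), ((n+2).choose k : ℝ) * a^k * b^(n+2-k) * ((k:ℝ) * ((k:ℝ) - 1))
      = (n+2) * (n+1) * a^2 * (a+b)^n := by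
  rw [Finset.sum_range_succ', Finset.sum_range_succ']
  simp only [Nat.cast_zero, Nat.cast_one, Nat.cast_add]
  norm_num
  rw [show ((n:ℝ)+2) * ((n:ℝ)+1) * a^2 * (a+b)^n = ((n:ℝ)+2) * ((n:ℝ)+1) * a^2 * ∑ k ∈ Finset.range (n+1), (n.choose k : ℝ) * a^k * b^(n-k) from by rw [binom_sum0], Finset.mul_sum]
  refine Finset.sum_congr rfl fun i _ => ?_
  have h1 : (n+2) * (n+1).choose (i+1) = (n+2).choose (i+2) * (i+2) := Nat.add_one_mul_choose_eq (n+1) (i+1)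
  have h2 : (n+1) * n.choose i = (n+1).choose (i+1) * (i+1) := Nat.add_one_mul_choose_eq n i
  have h : (n+2).choose (i+2) * ((i+2)*(i+1)) = (n+2)*(n+1)* n.choose i := by
    calc (n+2).choose (i+2) * ((i+2)*(i+1)) = ((n+2).choose (i+2) * (i+2))*(i+1) := by ring
      _ = ((n+2) * (n+1).choose (i+1))*(i+1) := by rw [← h1]
      _ = (n+2)*((n+1).choose (i+1)*(i+1)) := by ring
      _ = (n+2)*((n+1)* n.choose i) := by rw [← h2]
      _ = (n+2)*(n+1)* n.choose i := by ring
  have h' : ((n+2).choose (i+2) : ℝ) * (((i:ℝ)+2)*((i:ℝ)+1)) = ((n:ℝ)+2)*((n:ℝ)+1)* (n.choose i : ℝ) := by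
    exact_mod_cast congrArg (Nat.cast (R := ℝ)) h
  have hb : n + 2 - (i+2) = n - i := by omega
  rw [hb]
  linear_combination (a^(i+2) * b^(n-i)) * h'

lemma pp_prod (a b : ℝ) (σ k : ℕ) (hk : k ≤ σ) :
    pp a k * pp b (σ - k) =
      Real.exp (-(a+b)) / (σ.factorial : ℝ) * ((σ.choose k : ℝ) * a^k * b^(σ-k)) := by
  have hfact : ((σ.choose k : ℝ)) * (k.factorial : ℝ) * ((σ-k).factorial : ℝ) = (σ.factorial : ℝ) := by
    exact_mod_cast Nat.choose_mul_factorial_mul_factorial hk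
  unfold pp
  have h1 : (k.factorial : ℝ) ≠ 0 := Nat.cast_ne_zero.mpr k.factorial_ne_zero
  have h2 : (((σ-k).factorial : ℕ) : ℝ) ≠ 0 := Nat.cast_ne_zero.mpr (σ-k).factorial_ne_zero
  have h3 : (σ.factorial : ℝ) ≠ 0 := Nat.cast_ne_zero.mpr σ.factorial_ne_zero
  field_simp
  rw [neg_add, Real.exp_add]
  linear_combination -(Real.exp (-a) * Real.exp (-b) * a^k * b^(σ-k)) * hfact

theorem stmt_6 (m₁ m₂ p q : ℝ) (hm₁ : 0 < m₁) (hm₂ : 0 < m₂)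
    (hp : 0 ≤ p) (hq : 0 ≤ q) (hz : 0 < m₁ * p + m₂ * q) (σ : ℕ) :
    (∑ k ∈ Finset.range (σ + 1), pp (m₁ * p) k * pp (m₂ * q) (σ - k) *
        ((m₂ * k - m₁ * ((σ : ℝ) - k)) ^ 2 - (m₂ ^ 2 * k + m₁ ^ 2 * ((σ : ℝ) - k)))) /
      (∑ k ∈ Finset.range (σ + 1), pp (m₁ * p) k * pp (m₂ * q) (σ - k)) =
    (σ : ℝ) * ((σ : ℝ) - 1) * (m₁ * m₂ * (q - p) / (m₁ * p + m₂ * q)) ^ 2 := by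
  have hsne : m₁ * p + m₂ * q ≠ 0 := ne_of_gt hz
  have hc0 : (0:ℝ) < Real.exp (-(m₁*p+m₂*q)) / (σ.factorial : ℝ) := by positivity
  have hnum : (∑ k ∈ Finset.range (σ + 1), pp (m₁ * p) k * pp (m₂ * q) (σ - k) *
        ((m₂ * k - m₁ * ((σ : ℝ) - k)) ^ 2 - (m₂ ^ 2 * k + m₁ ^ 2 * ((σ : ℝ) - k)))) =
      Real.exp (-(m₁*p+m₂*q)) / (σ.factorial : ℝ) *
      ∑ k ∈ Finset.range (σ + 1), ((σ.choose k : ℝ) * (m₁*p)^k * (m₂*q)^(σ-k)) *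
        ((m₂ * k - m₁ * ((σ : ℝ) - k)) ^ 2 - (m₂ ^ 2 * k + m₁ ^ 2 * ((σ : ℝ) - k))) := by
    rw [Finset.mul_sum]
    refine Finset.sum_congr rfl fun k hk => ?_
    rw [pp_prod _ _ _ _ (Nat.lt_succ_iff.mp (Finset.mem_range.mp hk))]
    ring
  have hden : (∑ k ∈ Finset.range (σ + 1), pp (m₁ * p) k * pp (m₂ * q) (σ - k)) =
      Real.exp (-(m₁*p+m₂*q)) / (σ.factorial : ℝ) * (m₁*p + m₂*q)^σ := by
    rw [← binom_sum0 (m₁*p) (m₂*q) σ, Finset.mul_sum]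
    refine Finset.sum_congr rfl fun k hk => ?_
    rw [pp_prod _ _ _ _ (Nat.lt_succ_iff.mp (Finset.mem_range.mp hk))]
  rw [hnum, hden, mul_div_mul_left _ _ (ne_of_gt hc0)]
  match σ with
  | 0 => norm_num
  | 1 =>
    rw [Finset.sum_range_succ, Finset.sum_range_one]
    norm_num
  | (n+2) =>
    have hN : ∑ k ∈ Finset.range (n+2 + 1), ((((n+2):ℕ).choose k : ℝ) * (m₁*p)^k * (m₂*q)^(n+2-k)) *
        ((m₂ * k - m₁ * (((n+2:ℕ) : ℝ) - k)) ^ 2 - (m₂ ^ 2 * k + m₁ ^ 2 * (((n+2:ℕ) : ℝ) - k))) =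
      (m₁+m₂)^2 * (∑ k ∈ Finset.range (n+3), (((n+2)).choose k : ℝ) * (m₁*p)^k * (m₂*q)^(n+2-k) * ((k:ℝ) * ((k:ℝ) - 1)))
      + (-2*m₁*(m₁+m₂)*((n:ℝ)+1)) * (∑ k ∈ Finset.range (n+3), (((n+1)+1).choose k : ℝ) * (m₁*p)^k * (m₂*q)^((n+1)+1-k) * (k:ℝ))
      + (m₁^2*((n:ℝ)+2)*((n:ℝ)+1)) * (∑ k ∈ Finset.range ((n+2)+1), (((n+2)).choose k : ℝ) * (m₁*p)^k * (m₂*q)^((n+2)-k)) := by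
      rw [Finset.mul_sum, Finset.mul_sum, Finset.mul_sum, ← Finset.sum_add_distrib, ← Finset.sum_add_distrib]
      refine Finset.sum_congr rfl fun k hk => ?_
      push_cast
      ring
    rw [hN, binom_sum2 (m₁*p) (m₂*q) n, binom_sum1 (m₁*p) (m₂*q) (n+1), binom_sum0 (m₁*p) (m₂*q) (n+2)]
    push_cast
    field_simp
    ring
end

section
/- Let X ~ Poisson(m₁ p) and Y ~ Poisson(m₂ q) be independent and define Z = ((m₂X - m₁Y)² - (m₂²X + m₁²Y))/(X + Y) with the convention Z = 0 when X + Y = 0. Then E[Z] = m₁² m₂² · ((q-p)²/z) · (1 - (1 - e^{-z})/z), where z = m₁p + m₂q > 0. In particular E[Z] = 0 when p = q. -/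
open scoped BigOperators
open Real

namespace Stmt7Aux

lemma hasSum_exp_div (c : ℝ) :
    HasSum (fun n : ℕ => c ^ n / (Nat.factorial n : ℝ)) (Real.exp c) := by
  rw [Real.exp_eq_exp_ℝ]
  exact NormedSpace.expSeries_div_hasSum_exp c

lemma pp_eq (c : ℝ) (k : ℕ) :
    pp c k = Real.exp (-c) * (c ^ k / (Nat.factorial k : ℝ)) := by
  rw [pp, mul_div_assoc]

lemma hasSum_pp (c : ℝ) : HasSum (pp c) 1 := by
  have h := (hasSum_exp_div c).mul_left (Real.exp (-c))
  have : Real.exp (-c) * Real.exp c = 1 := by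
    rw [← Real.exp_add, neg_add_cancel, Real.exp_zero]
  rw [this] at h
  exact h.congr_fun fun k => pp_eq c k

lemma summable_pp (c : ℝ) : Summable (pp c) := (hasSum_pp c).summable

lemma pp_nonneg {c : ℝ} (hc : 0 ≤ c) (k : ℕ) : 0 ≤ pp c k := by
  rw [pp]; positivity

lemma pp_succ_mul (c : ℝ) (k : ℕ) : pp c (k + 1) * ((k : ℝ) + 1) = c * pp c k := by
  have hf : (Nat.factorial k : ℝ) ≠ 0 := Nat.cast_ne_zero.mpr (Nat.factorial_ne_zero k)
  have h1 : ((k : ℝ) + 1) ≠ 0 := by positivity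
  rw [pp, pp, Nat.factorial_succ]
  push_cast
  field_simp
  ring

lemma summable_pp_mul (c : ℝ) : Summable (fun k : ℕ => pp c k * k) := by
  rw [← summable_nat_add_iff 1]
  have : (fun k : ℕ => pp c (k + 1) * ((k + 1 : ℕ) : ℝ)) = fun k => c * pp c k := by
    funext k
    push_cast
    exact pp_succ_mul c k
  exact this ▸ (summable_pp c).mul_left c

lemma binom (c d : ℝ) (m : ℕ) :
    ∑ j ∈ Finset.range (m + 1),
        c ^ j * d ^ (m - j) / ((Nat.factorial j : ℝ) * (Nat.factorial (m - j) : ℝ))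
      = (c + d) ^ m / (Nat.factorial m : ℝ) := by
  rw [add_pow, Finset.sum_div]
  refine Finset.sum_congr rfl fun j hj => ?_
  have hj' : j ≤ m := Nat.lt_succ_iff.mp (Finset.mem_range.mp hj)
  have h : ((Nat.choose m j : ℕ) : ℝ) * (Nat.factorial j : ℝ) * (Nat.factorial (m - j) : ℝ)
      = (Nat.factorial m : ℝ) := by
    exact_mod_cast congrArg (Nat.cast : ℕ → ℝ) (Nat.choose_mul_factorial_mul_factorial hj')
  have hfj : (0:ℝ) < (Nat.factorial j : ℝ) := by exact_mod_cast Nat.factorial_pos j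
  have hfmj : (0:ℝ) < (Nat.factorial (m - j) : ℝ) := by exact_mod_cast Nat.factorial_pos (m - j)
  have hfm : (0:ℝ) < (Nat.factorial m : ℝ) := by exact_mod_cast Nat.factorial_pos m
  rw [div_eq_div_iff (by positivity) hfm.ne', ← h]
  ring

lemma sum_shift2 (f : ℕ → ℝ) (m : ℕ) (h0 : f 0 = 0) (h1 : f 1 = 0) :
    ∑ k ∈ Finset.range (m + 3), f k = ∑ j ∈ Finset.range (m + 1), f (j + 2) := by
  rw [Finset.sum_range_succ', Finset.sum_range_succ', h0, h1, add_zero, add_zero]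

lemma U1 (c d : ℝ) (m : ℕ) :
    ∑ k ∈ Finset.range (m + 3),
        (k : ℝ) * ((k : ℝ) - 1) *
          (c ^ k * d ^ (m + 2 - k) / ((Nat.factorial k : ℝ) * (Nat.factorial (m + 2 - k) : ℝ)))
      = c ^ 2 * ((c + d) ^ m / (Nat.factorial m : ℝ)) := by
  rw [sum_shift2 _ m (by norm_num) (by norm_num), ← binom c d m, Finset.mul_sum]
  refine Finset.sum_congr rfl fun j hj => ?_
  have hj' : j ≤ m := Nat.lt_succ_iff.mp (Finset.mem_range.mp hj)
  have h1 : m + 2 - (j + 2) = m - j := by omega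
  have hfj : (Nat.factorial j : ℝ) ≠ 0 := Nat.cast_ne_zero.mpr (Nat.factorial_ne_zero _)
  have hfmj : (Nat.factorial (m - j) : ℝ) ≠ 0 := Nat.cast_ne_zero.mpr (Nat.factorial_ne_zero _)
  rw [h1, Nat.factorial_succ (j + 1), Nat.factorial_succ j]
  push_cast
  have h2 : ((j:ℝ) + 1 + 1) ≠ 0 := by positivity
  have h3 : ((j:ℝ) + 1) ≠ 0 := by positivity
  field_simp
  ring

lemma U2 (c d : ℝ) (m : ℕ) :
    ∑ k ∈ Finset.range (m + 3),
        ((m + 2 - k : ℕ) : ℝ) * (((m + 2 - k : ℕ) : ℝ) - 1) *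
          (c ^ k * d ^ (m + 2 - k) / ((Nat.factorial k : ℝ) * (Nat.factorial (m + 2 - k) : ℝ)))
      = d ^ 2 * ((c + d) ^ m / (Nat.factorial m : ℝ)) := by
  have hrefl := Finset.sum_range_reflect
    (fun k => (k : ℝ) * ((k : ℝ) - 1) *
      (d ^ k * c ^ (m + 2 - k) / ((Nat.factorial k : ℝ) * (Nat.factorial (m + 2 - k) : ℝ)))) (m + 3)
  have h2 : ∑ k ∈ Finset.range (m + 3),
      ((m + 2 - k : ℕ) : ℝ) * (((m + 2 - k : ℕ) : ℝ) - 1) *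
        (c ^ k * d ^ (m + 2 - k) / ((Nat.factorial k : ℝ) * (Nat.factorial (m + 2 - k) : ℝ)))
      = ∑ k ∈ Finset.range (m + 3),
        (fun k : ℕ => (k : ℝ) * ((k : ℝ) - 1) *
          (d ^ k * c ^ (m + 2 - k) / ((Nat.factorial k : ℝ) * (Nat.factorial (m + 2 - k) : ℝ))))
          (m + 3 - 1 - k) := by
    refine Finset.sum_congr rfl fun k hk => ?_
    have hk' : k ≤ m + 2 := Nat.lt_succ_iff.mp (Finset.mem_range.mp hk)
    have e1 : m + 3 - 1 - k = m + 2 - k := by omega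
    have e2 : m + 2 - (m + 2 - k) = k := by omega
    simp only [e1, e2]
    ring
  rw [h2, hrefl, U1 d c m, add_comm d c]

lemma U3 (c d : ℝ) (m : ℕ) :
    ∑ k ∈ Finset.range (m + 3),
        (k : ℝ) * ((m + 2 - k : ℕ) : ℝ) *
          (c ^ k * d ^ (m + 2 - k) / ((Nat.factorial k : ℝ) * (Nat.factorial (m + 2 - k) : ℝ)))
      = c * d * ((c + d) ^ m / (Nat.factorial m : ℝ)) := by
  rw [Finset.sum_range_succ']
  simp only [Nat.cast_zero, zero_mul, add_zero]
  rw [Finset.sum_range_succ]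
  have e0 : m + 2 - (m + 1 + 1) = 0 := by omega
  simp only [e0, Nat.cast_zero, mul_zero, zero_mul, add_zero, pow_zero]
  rw [← binom c d m, Finset.mul_sum]
  refine Finset.sum_congr rfl fun j hj => ?_
  have hj' : j ≤ m := Nat.lt_succ_iff.mp (Finset.mem_range.mp hj)
  have e1 : m + 2 - (j + 1) = (m - j) + 1 := by omega
  have hfj : (Nat.factorial j : ℝ) ≠ 0 := Nat.cast_ne_zero.mpr (Nat.factorial_ne_zero _)
  have hfmj : (Nat.factorial (m - j) : ℝ) ≠ 0 := Nat.cast_ne_zero.mpr (Nat.factorial_ne_zero _)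
  rw [e1, Nat.factorial_succ j, Nat.factorial_succ (m - j)]
  push_cast [Nat.cast_sub hj']
  have h3 : ((j:ℝ) + 1) ≠ 0 := by positivity
  have h4 : ((m:ℝ) - j + 1) ≠ 0 := by
    have : (j:ℝ) ≤ m := by exact_mod_cast hj'
    nlinarith
  field_simp
  ring

lemma Srow (m₁ m₂ c d : ℝ) (m : ℕ) :
    ∑ kl ∈ Finset.HasAntidiagonal.antidiagonal (m + 2),
        pp c kl.1 * pp d kl.2 *
          (if kl.1 + kl.2 = 0 then 0 else
            ((m₂ * kl.1 - m₁ * kl.2) ^ 2 - (m₂ ^ 2 * kl.1 + m₁ ^ 2 * kl.2)) / ((kl.1 : ℝ) + kl.2))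
      = (m₂ * c - m₁ * d) ^ 2 * Real.exp (-(c + d)) *
          ((c + d) ^ m / (Nat.factorial m : ℝ)) / ((m : ℝ) + 2) := by
  rw [Finset.Nat.sum_antidiagonal_eq_sum_range_succ_mk]
  have key : ∀ k ∈ Finset.range (m + 3),
      pp c k * pp d (m + 2 - k) *
        (if k + (m + 2 - k) = 0 then 0 else
          ((m₂ * k - m₁ * ((m + 2 - k : ℕ) : ℝ)) ^ 2 -
              (m₂ ^ 2 * k + m₁ ^ 2 * ((m + 2 - k : ℕ) : ℝ))) / ((k : ℝ) + ((m + 2 - k : ℕ) : ℝ)))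
      = (Real.exp (-(c + d)) / ((m : ℝ) + 2)) *
          (m₂ ^ 2 * ((k : ℝ) * ((k : ℝ) - 1) *
              (c ^ k * d ^ (m + 2 - k) / ((Nat.factorial k : ℝ) * (Nat.factorial (m + 2 - k) : ℝ))))
           + m₁ ^ 2 * (((m + 2 - k : ℕ) : ℝ) * (((m + 2 - k : ℕ) : ℝ) - 1) *
              (c ^ k * d ^ (m + 2 - k) / ((Nat.factorial k : ℝ) * (Nat.factorial (m + 2 - k) : ℝ))))
           - 2 * m₁ * m₂ * ((k : ℝ) * ((m + 2 - k : ℕ) : ℝ) *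
              (c ^ k * d ^ (m + 2 - k) / ((Nat.factorial k : ℝ) * (Nat.factorial (m + 2 - k) : ℝ))))) := by
    intro k hk
    have hk' : k ≤ m + 2 := Nat.lt_succ_iff.mp (Finset.mem_range.mp hk)
    have hne : ¬ (k + (m + 2 - k) = 0) := by omega
    rw [if_neg hne]
    have hcast : ((m + 2 - k : ℕ) : ℝ) = (m : ℝ) + 2 - k := by
      push_cast [Nat.cast_sub hk']; ring
    have hsum : (k : ℝ) + ((m + 2 - k : ℕ) : ℝ) = (m : ℝ) + 2 := by rw [hcast]; ring
    rw [hsum, pp, pp]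
    have hexp : Real.exp (-(c + d)) = Real.exp (-c) * Real.exp (-d) := by
      rw [← Real.exp_add]; ring_nf
    have hm2 : ((m : ℝ) + 2) ≠ 0 := by positivity
    have hfk : (Nat.factorial k : ℝ) ≠ 0 := Nat.cast_ne_zero.mpr (Nat.factorial_ne_zero _)
    have hfmk : (Nat.factorial (m + 2 - k) : ℝ) ≠ 0 := Nat.cast_ne_zero.mpr (Nat.factorial_ne_zero _)
    rw [hexp]
    field_simp
    ring
  rw [Finset.sum_congr rfl key, ← Finset.mul_sum]
  have hsplit : ∑ k ∈ Finset.range (m + 3),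
      (m₂ ^ 2 * ((k : ℝ) * ((k : ℝ) - 1) *
          (c ^ k * d ^ (m + 2 - k) / ((Nat.factorial k : ℝ) * (Nat.factorial (m + 2 - k) : ℝ))))
       + m₁ ^ 2 * (((m + 2 - k : ℕ) : ℝ) * (((m + 2 - k : ℕ) : ℝ) - 1) *
          (c ^ k * d ^ (m + 2 - k) / ((Nat.factorial k : ℝ) * (Nat.factorial (m + 2 - k) : ℝ))))
       - 2 * m₁ * m₂ * ((k : ℝ) * ((m + 2 - k : ℕ) : ℝ) *
          (c ^ k * d ^ (m + 2 - k) / ((Nat.factorial k : ℝ) * (Nat.factorial (m + 2 - k) : ℝ)))))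
      = m₂ ^ 2 * (c ^ 2 * ((c + d) ^ m / (Nat.factorial m : ℝ)))
        + m₁ ^ 2 * (d ^ 2 * ((c + d) ^ m / (Nat.factorial m : ℝ)))
        - 2 * m₁ * m₂ * (c * d * ((c + d) ^ m / (Nat.factorial m : ℝ))) := by
    rw [Finset.sum_sub_distrib, Finset.sum_add_distrib, ← Finset.mul_sum, ← Finset.mul_sum,
      ← Finset.mul_sum, U1, U2, U3]
  rw [hsplit]
  ring

lemma summable_antidiagonal (G : ℕ × ℕ → ℝ) (hG : Summable G) :
    Summable (fun n => ∑ kl ∈ Finset.HasAntidiagonal.antidiagonal n, G kl) := by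
  have h' : Summable fun x : Σ n : ℕ, Finset.HasAntidiagonal.antidiagonal n => G (x.2 : ℕ × ℕ) :=
    (Finset.HasAntidiagonal.sigmaAntidiagonalEquivProd.summable_iff (f := G)).mpr hG
  conv => congr; ext n; rw [← Finset.sum_finset_coe, ← tsum_fintype (L := SummationFilter.unconditional _)]
  exact h'.sigma' fun n => (hasSum_fintype _).summable

lemma tsum_prod_antidiagonal (G : ℕ × ℕ → ℝ) (hG : Summable G) :
    ∑' p : ℕ × ℕ, G p = ∑' n : ℕ, ∑ kl ∈ Finset.HasAntidiagonal.antidiagonal n, G kl := by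
  have h' : Summable fun x : Σ n : ℕ, Finset.HasAntidiagonal.antidiagonal n => G (x.2 : ℕ × ℕ) :=
    (Finset.HasAntidiagonal.sigmaAntidiagonalEquivProd.summable_iff (f := G)).mpr hG
  rw [← Finset.HasAntidiagonal.sigmaAntidiagonalEquivProd.tsum_eq G]
  have h2 : ∑' (c : Σ n : ℕ, Finset.HasAntidiagonal.antidiagonal n), G (Finset.HasAntidiagonal.sigmaAntidiagonalEquivProd c)
      = ∑' (n : ℕ), ∑' (kl : Finset.HasAntidiagonal.antidiagonal n), G (kl : ℕ × ℕ) :=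
    Summable.tsum_sigma' (fun n => (hasSum_fintype _).summable) h'
  rw [h2]
  refine tsum_congr fun n => ?_
  rw [← Finset.sum_finset_coe, ← tsum_fintype (L := SummationFilter.unconditional _)]
  rfl

lemma expsum (z : ℝ) (hz : 0 < z) :
    ∑' m : ℕ, z ^ m / ((Nat.factorial m : ℝ) * ((m : ℝ) + 2))
      = ((z - 1) * Real.exp z + 1) / z ^ 2 := by
  have hz' : z ≠ 0 := hz.ne'
  have h0 := hasSum_exp_div z
  have hs1 : HasSum (fun m : ℕ => z ^ m / (Nat.factorial (m + 1) : ℝ)) ((Real.exp z - 1) / z) := by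
    have h1 : HasSum (fun m : ℕ => z ^ (m + 1) / (Nat.factorial (m + 1) : ℝ)) (Real.exp z - 1) := by
      refine (hasSum_nat_add_iff (f := fun n : ℕ => z ^ n / (Nat.factorial n : ℝ)) 1).mpr ?_
      simpa using h0
    have h2 := h1.mul_left (1 / z)
    have h3 : (fun m : ℕ => (1 / z) * (z ^ (m + 1) / (Nat.factorial (m + 1) : ℝ)))
        = fun m : ℕ => z ^ m / (Nat.factorial (m + 1) : ℝ) := by
      funext m
      rw [pow_succ]
      field_simp
    rw [h3] at h2
    rw [show (Real.exp z - 1) / z = 1 / z * (Real.exp z - 1) by ring]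
    exact h2
  have hs2 : HasSum (fun m : ℕ => z ^ m / (Nat.factorial (m + 2) : ℝ))
      ((Real.exp z - 1 - z) / z ^ 2) := by
    have h1 : HasSum (fun m : ℕ => z ^ (m + 2) / (Nat.factorial (m + 2) : ℝ))
        (Real.exp z - 1 - z) := by
      refine (hasSum_nat_add_iff (f := fun n : ℕ => z ^ n / (Nat.factorial n : ℝ)) 2).mpr ?_
      have : Real.exp z - 1 - z + ∑ i ∈ Finset.range 2, z ^ i / (Nat.factorial i : ℝ)
          = Real.exp z := by
        rw [Finset.sum_range_succ, Finset.sum_range_one]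
        norm_num [Nat.factorial]
      rw [this]
      exact h0
    have h2 := h1.mul_left (1 / z ^ 2)
    have h3 : (fun m : ℕ => (1 / z ^ 2) * (z ^ (m + 2) / (Nat.factorial (m + 2) : ℝ)))
        = fun m : ℕ => z ^ m / (Nat.factorial (m + 2) : ℝ) := by
      funext m
      have : z ^ (m + 2) = z ^ m * z ^ 2 := by ring
      rw [this]
      field_simp
    rw [h3] at h2
    rw [show (Real.exp z - 1 - z) / z ^ 2 = 1 / z ^ 2 * (Real.exp z - 1 - z) by ring]
    exact h2
  have hsub := hs1.sub hs2
  have hfun : (fun m : ℕ => z ^ m / (Nat.factorial (m + 1) : ℝ)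
      - z ^ m / (Nat.factorial (m + 2) : ℝ))
      = fun m : ℕ => z ^ m / ((Nat.factorial m : ℝ) * ((m : ℝ) + 2)) := by
    funext m
    have hfm : (Nat.factorial m : ℝ) ≠ 0 := Nat.cast_ne_zero.mpr (Nat.factorial_ne_zero _)
    have hm1 : ((m : ℝ) + 1) ≠ 0 := by positivity
    have hm2 : ((m : ℝ) + 2) ≠ 0 := by positivity
    rw [Nat.factorial_succ (m + 1), Nat.factorial_succ m]
    push_cast
    field_simp
    ring
  rw [hfun] at hsub
  rw [hsub.tsum_eq]
  field_simp
  ring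

noncomputable def Gfun (m₁ m₂ c d : ℝ) (kl : ℕ × ℕ) : ℝ :=
  pp c kl.1 * pp d kl.2 *
    (if kl.1 + kl.2 = 0 then 0 else
      ((m₂ * kl.1 - m₁ * kl.2) ^ 2 - (m₂ ^ 2 * kl.1 + m₁ ^ 2 * kl.2)) / ((kl.1 : ℝ) + kl.2))

lemma claim_bound (m₁ m₂ : ℝ) (hm₁ : 0 < m₁) (hm₂ : 0 < m₂) (k l : ℕ) :
    |(if k + l = 0 then 0 else
      ((m₂ * k - m₁ * l) ^ 2 - (m₂ ^ 2 * k + m₁ ^ 2 * l)) / ((k : ℝ) + l))|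
    ≤ (2 * m₂ ^ 2 + 2 * m₁ * m₂) * k + 2 * m₁ ^ 2 * l := by
  have hK : (0:ℝ) ≤ (k:ℝ) := Nat.cast_nonneg k
  have hL : (0:ℝ) ≤ (l:ℝ) := Nat.cast_nonneg l
  by_cases h0 : k + l = 0
  · rw [if_pos h0, abs_zero]
    have h12 : 0 < m₁ * m₂ := mul_pos hm₁ hm₂
    nlinarith [mul_nonneg (sq_nonneg m₂) hK, mul_nonneg (sq_nonneg m₁) hL,
      mul_nonneg h12.le hK]
  · rw [if_neg h0]
    have h1 : (1:ℝ) ≤ (k:ℝ) + l := by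
      have : 1 ≤ k + l := Nat.one_le_iff_ne_zero.mpr h0
      exact_mod_cast this
    have hpos : (0:ℝ) < (k:ℝ) + l := by linarith
    rw [abs_div, abs_of_pos hpos, div_le_iff₀ hpos]
    refine abs_le.mpr ⟨?_, ?_⟩
    · nlinarith [mul_nonneg hK hL, mul_nonneg (mul_nonneg hm₁.le hm₂.le) (mul_nonneg hK hL),
        sq_nonneg (m₂ * k - m₁ * l), mul_nonneg (sq_nonneg m₂) hK,
        mul_nonneg (sq_nonneg m₁) hL,
        mul_nonneg (mul_nonneg (sq_nonneg m₂) hK) (by linarith : (0:ℝ) ≤ (k:ℝ) + l - 1),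
        mul_nonneg (mul_nonneg (sq_nonneg m₁) hL) (by linarith : (0:ℝ) ≤ (k:ℝ) + l - 1)]
    · nlinarith [mul_nonneg hK hL, mul_nonneg (mul_nonneg hm₁.le hm₂.le) (mul_nonneg hK hL),
        mul_nonneg (mul_nonneg hm₁.le hm₂.le) (mul_nonneg hK hK),
        mul_nonneg (sq_nonneg m₂) (mul_nonneg hK hK),
        mul_nonneg (sq_nonneg m₂) (mul_nonneg hK hL),
        mul_nonneg (sq_nonneg m₁) (mul_nonneg hL hL),
        mul_nonneg (sq_nonneg m₁) (mul_nonneg hK hL),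
        mul_nonneg (sq_nonneg m₂) hK, mul_nonneg (sq_nonneg m₁) hL]

set_option maxHeartbeats 1000000 in
lemma summable_G (m₁ m₂ c d : ℝ) (hm₁ : 0 < m₁) (hm₂ : 0 < m₂)
    (hc : 0 ≤ c) (hd : 0 ≤ d) : Summable (Gfun m₁ m₂ c d) := by
  have hf1 : Summable (fun k : ℕ => (2 * m₂ ^ 2 + 2 * m₁ * m₂) * (pp c k * k)) :=
    (summable_pp_mul c).mul_left _
  have hf1nn : (0 : ℕ → ℝ) ≤ fun k : ℕ => (2 * m₂ ^ 2 + 2 * m₁ * m₂) * (pp c k * k) := by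
    refine Pi.le_def.mpr fun k => ?_
    simp only [Pi.zero_apply]
    have h12 : 0 < m₁ * m₂ := mul_pos hm₁ hm₂
    have := mul_nonneg (pp_nonneg hc k) (Nat.cast_nonneg k : (0:ℝ) ≤ k)
    nlinarith [sq_nonneg m₂]
  have hg1nn : (0 : ℕ → ℝ) ≤ pp d := Pi.le_def.mpr fun l => by
    simpa using pp_nonneg hd l
  have hB1 : Summable (fun kl : ℕ × ℕ =>
      ((2 * m₂ ^ 2 + 2 * m₁ * m₂) * (pp c kl.1 * kl.1)) * pp d kl.2) :=
    Summable.mul_of_nonneg hf1 (summable_pp d) hf1nn hg1nn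
  have hf2 : Summable (fun l : ℕ => (2 * m₁ ^ 2) * (pp d l * l)) :=
    (summable_pp_mul d).mul_left _
  have hf2nn : (0 : ℕ → ℝ) ≤ fun l : ℕ => (2 * m₁ ^ 2) * (pp d l * l) := by
    refine Pi.le_def.mpr fun l => ?_
    simp only [Pi.zero_apply]
    have := mul_nonneg (pp_nonneg hd l) (Nat.cast_nonneg l : (0:ℝ) ≤ l)
    nlinarith [sq_nonneg m₁]
  have hg2nn : (0 : ℕ → ℝ) ≤ pp c := Pi.le_def.mpr fun k => by
    simpa using pp_nonneg hc k
  have hB2 : Summable (fun kl : ℕ × ℕ =>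
      pp c kl.1 * ((2 * m₁ ^ 2) * (pp d kl.2 * kl.2))) :=
    Summable.mul_of_nonneg (summable_pp c) hf2 hg2nn hf2nn
  rw [← summable_abs_iff]
  refine Summable.of_nonneg_of_le (fun kl => abs_nonneg _) ?_ (hB1.add hB2)
  rintro ⟨k, l⟩
  have hppc := pp_nonneg hc k
  have hppd := pp_nonneg hd l
  have habs : |Gfun m₁ m₂ c d (k, l)| = pp c k * pp d l *
      |(if k + l = 0 then 0 else
        ((m₂ * k - m₁ * l) ^ 2 - (m₂ ^ 2 * k + m₁ ^ 2 * l)) / ((k : ℝ) + l))| := by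
    rw [Gfun, abs_mul, abs_mul, abs_of_nonneg hppc, abs_of_nonneg hppd]
  rw [habs]
  have hcl := claim_bound m₁ m₂ hm₁ hm₂ k l
  calc pp c k * pp d l *
      |(if k + l = 0 then 0 else
        ((m₂ * k - m₁ * l) ^ 2 - (m₂ ^ 2 * k + m₁ ^ 2 * l)) / ((k : ℝ) + l))|
      ≤ pp c k * pp d l * ((2 * m₂ ^ 2 + 2 * m₁ * m₂) * k + 2 * m₁ ^ 2 * l) :=
        mul_le_mul_of_nonneg_left hcl (mul_nonneg hppc hppd)
    _ = ((2 * m₂ ^ 2 + 2 * m₁ * m₂) * (pp c k * k)) * pp d l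
          + pp c k * ((2 * m₁ ^ 2) * (pp d l * l)) := by ring

lemma key_tsum (m₁ m₂ c d : ℝ) (hm₁ : 0 < m₁) (hm₂ : 0 < m₂)
    (hc : 0 ≤ c) (hd : 0 ≤ d) (hz : 0 < c + d) :
    (∑' k : ℕ, ∑' l : ℕ, pp c k * pp d l *
        (if k + l = 0 then 0 else
          ((m₂ * k - m₁ * l) ^ 2 - (m₂ ^ 2 * k + m₁ ^ 2 * l)) / ((k : ℝ) + l)))
      = (m₂ * c - m₁ * d) ^ 2 * (c + d - 1 + Real.exp (-(c + d))) / (c + d) ^ 2 := by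
  have hG : Summable (Gfun m₁ m₂ c d) := summable_G m₁ m₂ c d hm₁ hm₂ hc hd
  have hiter : (∑' k : ℕ, ∑' l : ℕ, pp c k * pp d l *
      (if k + l = 0 then 0 else
        ((m₂ * k - m₁ * l) ^ 2 - (m₂ ^ 2 * k + m₁ ^ 2 * l)) / ((k : ℝ) + l)))
      = ∑' p : ℕ × ℕ, Gfun m₁ m₂ c d p := (hG.tsum_prod' hG.prod_factor).symm
  rw [hiter, tsum_prod_antidiagonal _ hG]
  have hRow : Summable (fun n => ∑ kl ∈ Finset.HasAntidiagonal.antidiagonal n, Gfun m₁ m₂ c d kl) :=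
    summable_antidiagonal _ hG
  rw [Summable.tsum_eq_zero_add hRow, Summable.tsum_eq_zero_add ((summable_nat_add_iff 1).mpr hRow)]
  have row0 : ∑ kl ∈ Finset.HasAntidiagonal.antidiagonal 0, Gfun m₁ m₂ c d kl = 0 := by
    rw [Finset.Nat.antidiagonal_zero]
    simp [Gfun]
  have row1 : ∑ kl ∈ Finset.HasAntidiagonal.antidiagonal (0 + 1), Gfun m₁ m₂ c d kl = 0 := by
    rw [zero_add, Finset.Nat.sum_antidiagonal_eq_sum_range_succ_mk,
      Finset.sum_range_succ, Finset.sum_range_one]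
    simp only [Gfun]
    norm_num
  rw [row0, row1, zero_add, zero_add]
  have hrows : ∀ m : ℕ, ∑ kl ∈ Finset.HasAntidiagonal.antidiagonal (m + 1 + 1), Gfun m₁ m₂ c d kl
      = ((m₂ * c - m₁ * d) ^ 2 * Real.exp (-(c + d))) *
          ((c + d) ^ m / ((Nat.factorial m : ℝ) * ((m : ℝ) + 2))) := by
    intro m
    have hS := Srow m₁ m₂ c d m
    have e : m + 1 + 1 = m + 2 := rfl
    simp only [Gfun]
    rw [e, hS]
    have hfm : (Nat.factorial m : ℝ) ≠ 0 := Nat.cast_ne_zero.mpr (Nat.factorial_ne_zero _)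
    have hm2 : ((m : ℝ) + 2) ≠ 0 := by positivity
    field_simp
  rw [tsum_congr hrows, tsum_mul_left, expsum (c + d) hz]
  have hE : Real.exp (-(c + d)) * Real.exp (c + d) = 1 := by
    rw [← Real.exp_add, neg_add_cancel, Real.exp_zero]
  linear_combination ((m₂ * c - m₁ * d) ^ 2 * (c + d - 1) / (c + d) ^ 2) * hE

end Stmt7Aux

theorem stmt_7 (m₁ m₂ p q : ℝ) (hm₁ : 0 < m₁) (hm₂ : 0 < m₂)
    (hp : 0 ≤ p) (hq : 0 ≤ q) (hz : 0 < m₁ * p + m₂ * q) :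
    (∑' k : ℕ, ∑' l : ℕ, pp (m₁ * p) k * pp (m₂ * q) l *
        (if k + l = 0 then 0 else
          ((m₂ * k - m₁ * l) ^ 2 - (m₂ ^ 2 * k + m₁ ^ 2 * l)) / ((k : ℝ) + l))) =
      m₁ ^ 2 * m₂ ^ 2 * ((q - p) ^ 2 / (m₁ * p + m₂ * q)) *
        (1 - (1 - Real.exp (-(m₁ * p + m₂ * q))) / (m₁ * p + m₂ * q)) ∧
    (p = q →
      (∑' k : ℕ, ∑' l : ℕ, pp (m₁ * p) k * pp (m₂ * q) l *
        (if k + l = 0 then 0 else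
          ((m₂ * k - m₁ * l) ^ 2 - (m₂ ^ 2 * k + m₁ ^ 2 * l)) / ((k : ℝ) + l))) = 0) := by
  have hc : 0 ≤ m₁ * p := mul_nonneg hm₁.le hp
  have hd : 0 ≤ m₂ * q := mul_nonneg hm₂.le hq
  have hmain := Stmt7Aux.key_tsum m₁ m₂ (m₁ * p) (m₂ * q) hm₁ hm₂ hc hd hz
  have hRHS : (m₂ * (m₁ * p) - m₁ * (m₂ * q)) ^ 2 *
        (m₁ * p + m₂ * q - 1 + Real.exp (-(m₁ * p + m₂ * q))) / (m₁ * p + m₂ * q) ^ 2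
      = m₁ ^ 2 * m₂ ^ 2 * ((q - p) ^ 2 / (m₁ * p + m₂ * q)) *
        (1 - (1 - Real.exp (-(m₁ * p + m₂ * q))) / (m₁ * p + m₂ * q)) := by
    have hzne : (m₁ * p + m₂ * q) ≠ 0 := hz.ne'
    field_simp
    ring
  constructor
  · rw [hmain, hRHS]
  · intro hpq
    rw [hmain, hRHS, hpq]
    simp
end

section
/- For all z > 0, it holds that z / (1 - (1 - e^{-z})/z) ≤ 2 + z; equivalently, z² ≤ (2 + z)(z - 1 + e^{-z}). -/
theorem stmt_9 (z : ℝ) (hz : 0 < z) :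
    z ^ 2 ≤ (2 + z) * (z - 1 + Real.exp (-z)) := by
  have key : (2 - z) ≤ (2 + z) * Real.exp (-z) := by
    set f : ℝ → ℝ := fun x => (2 + x) * Real.exp (-x) - (2 - x) with hf
    have hderiv : ∀ x : ℝ, HasDerivAt f (1 - (1 + x) * Real.exp (-x)) x := by
      intro x
      have h1 : HasDerivAt (fun x : ℝ => Real.exp (-x)) (-Real.exp (-x)) x := by
        simpa [Function.comp_def] using (Real.hasDerivAt_exp (-x)).comp x (hasDerivAt_neg x)
      have h2 : HasDerivAt (fun x : ℝ => (2 + x) * Real.exp (-x))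
          (1 * Real.exp (-x) + (2 + x) * (-Real.exp (-x))) x := by
        simpa [Pi.mul_def] using ((hasDerivAt_id' x).const_add (2:ℝ)).mul h1
      have h3 : HasDerivAt (fun x : ℝ => 2 - x) (-1 : ℝ) x := by
        simpa using (hasDerivAt_id' x).const_sub (2:ℝ)
      have := h2.fun_sub h3
      convert this using 1
      · rfl
      · rfl
      · ring
    have hmono : MonotoneOn f (Set.Ici 0) := by
      apply monotoneOn_of_deriv_nonneg (convex_Ici 0)
      · exact (Continuous.sub ((continuous_const.add continuous_id).mul
          (Real.continuous_exp.comp continuous_neg)) (continuous_const.sub continuous_id)).continuousOn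
      · intro x hx
        exact (hderiv x).differentiableAt.differentiableWithinAt
      · intro x hx
        rw [(hderiv x).deriv]
        have h1 : (1 + x) ≤ Real.exp x := by linarith [Real.add_one_le_exp x]
        have h2 : (1 + x) * Real.exp (-x) ≤ Real.exp x * Real.exp (-x) :=
          mul_le_mul_of_nonneg_right h1 (Real.exp_pos _).le
        rw [← Real.exp_add] at h2
        simp at h2
        linarith
    have h0 := hmono (Set.mem_Ici.2 le_rfl) (Set.mem_Ici.2 hz.le) hz.le
    simp [hf] at h0
    linarith
  nlinarith [key]
end

section
/- Let X ~ Poisson(m₁ p) and Y ~ Poisson(m₂ q) be independent with m₁, m₂ > 0 and p = q > 0. Then the conditional expectation of Z = ((m₂X - m₁Y)² - (m₂²X + m₁²Y))/(X + Y) given X + Y = σ equals 0 for every σ ≥ 1. -/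
open scoped BigOperators
open Real

lemma sum0 (a b : ℝ) (n : ℕ) :
    ∑ k ∈ Finset.range (n + 1), (n.choose k : ℝ) * a ^ k * b ^ (n - k) = (a + b) ^ n := by
  rw [add_pow]
  exact Finset.sum_congr rfl fun k _ => by ring

lemma sum1 (a b : ℝ) (n : ℕ) :
    ∑ k ∈ Finset.range (n + 2), ((n + 1).choose k : ℝ) * a ^ k * b ^ (n + 1 - k) * k
      = (n + 1) * a * (a + b) ^ n := by
  rw [Finset.sum_range_succ']
  simp only [Nat.cast_zero, mul_zero, add_zero]
  have h : ∀ j, ((n + 1).choose (j + 1) : ℝ) * (j + 1) = (n + 1) * (n.choose j : ℝ) := by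
    intro j
    have := Nat.add_one_mul_choose_eq n j
    exact_mod_cast congrArg (Nat.cast : ℕ → ℝ) this.symm
  calc ∑ j ∈ Finset.range (n + 1),
        ((n + 1).choose (j + 1) : ℝ) * a ^ (j + 1) * b ^ (n + 1 - (j + 1)) * ((j + 1 : ℕ) : ℝ)
      = ∑ j ∈ Finset.range (n + 1), (n + 1) * a * ((n.choose j : ℝ) * a ^ j * b ^ (n - j)) := by
        refine Finset.sum_congr rfl fun j _ => ?_
        have hb : n + 1 - (j + 1) = n - j := by omega
        rw [hb]
        have hj := h j
        push_cast at hj ⊢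
        linear_combination (a ^ (j + 1) * b ^ (n - j)) * hj
    _ = (n + 1) * a * (a + b) ^ n := by
        rw [← Finset.mul_sum, sum0]

lemma sum2 (a b : ℝ) (n : ℕ) :
    ∑ k ∈ Finset.range (n + 3), ((n + 2).choose k : ℝ) * a ^ k * b ^ (n + 2 - k) *
      ((k : ℝ) * ((k : ℝ) - 1)) = (n + 2) * (n + 1) * a ^ 2 * (a + b) ^ n := by
  rw [Finset.sum_range_succ']
  simp only [Nat.cast_zero, zero_mul, mul_zero, add_zero]
  have h : ∀ j, ((n + 2).choose (j + 1) : ℝ) * (j + 1) = (n + 2) * ((n + 1).choose j : ℝ) := by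
    intro j
    have := Nat.add_one_mul_choose_eq (n + 1) j
    exact_mod_cast congrArg (Nat.cast : ℕ → ℝ) this.symm
  calc ∑ j ∈ Finset.range (n + 2),
        ((n + 2).choose (j + 1) : ℝ) * a ^ (j + 1) * b ^ (n + 2 - (j + 1)) *
          (((j + 1 : ℕ) : ℝ) * (((j + 1 : ℕ) : ℝ) - 1))
      = ∑ j ∈ Finset.range (n + 2),
          (n + 2) * a * (((n + 1).choose j : ℝ) * a ^ j * b ^ (n + 1 - j) * j) := by
        refine Finset.sum_congr rfl fun j _ => ?_
        have hb : n + 2 - (j + 1) = n + 1 - j := by omega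
        rw [hb]
        have hj := h j
        push_cast at hj ⊢
        linear_combination (a ^ (j + 1) * b ^ (n + 1 - j) * j) * hj
    _ = (n + 2) * (n + 1) * a ^ 2 * (a + b) ^ n := by
        rw [← Finset.mul_sum, sum1]
        ring

lemma sumf (a b : ℝ) (σ : ℕ) (hσ : 1 ≤ σ) :
    ∑ k ∈ Finset.range (σ + 1), (σ.choose k : ℝ) * a ^ k * b ^ (σ - k) *
      ((b * k - a * ((σ : ℝ) - k)) ^ 2 - (b ^ 2 * k + a ^ 2 * ((σ : ℝ) - k))) = 0 := by
  match σ, hσ with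
  | 1, _ =>
    simp [Finset.sum_range_succ]
  | (n + 2), _ =>
    set s : ℝ := ((n + 2 : ℕ) : ℝ) with hs
    have e : ∀ k ∈ Finset.range (n + 2 + 1),
        ((n + 2).choose k : ℝ) * a ^ k * b ^ (n + 2 - k) *
          ((b * k - a * (s - k)) ^ 2 - (b ^ 2 * k + a ^ 2 * (s - k)))
        = (a + b) ^ 2 * (((n + 2).choose k : ℝ) * a ^ k * b ^ (n + 2 - k) *
              ((k : ℝ) * ((k : ℝ) - 1)))
          + ((a + b) ^ 2 + a ^ 2 - b ^ 2 - 2 * a * s * (a + b)) *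
              (((n + 2).choose k : ℝ) * a ^ k * b ^ (n + 2 - k) * k)
          + (a ^ 2 * s * (s - 1)) * (((n + 2).choose k : ℝ) * a ^ k * b ^ (n + 2 - k)) := by
      intro k _
      ring
    rw [Finset.sum_congr rfl e]
    simp only [Finset.sum_add_distrib, ← Finset.mul_sum]
    rw [sum2, show n + 2 + 1 = n + 1 + 2 from rfl, sum1,
      show n + 1 + 2 = n + 2 + 1 from rfl, sum0]
    have hs' : s = (n : ℝ) + 2 := by push_cast [hs]; ring
    rw [hs']
    push_cast
    ring

lemma pp_mul (a b p : ℝ) (σ k : ℕ) (hk : k ≤ σ) :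
    pp (a * p) k * pp (b * p) (σ - k)
      = (Real.exp (-((a + b) * p)) * p ^ σ / (Nat.factorial σ)) *
          ((σ.choose k : ℝ) * a ^ k * b ^ (σ - k)) := by
  have hfac : ((σ.choose k : ℕ) : ℝ) * (Nat.factorial k) * (Nat.factorial (σ - k))
      = (Nat.factorial σ) := by
    exact_mod_cast congrArg (Nat.cast : ℕ → ℝ)
      (Nat.choose_mul_factorial_mul_factorial hk)
  have hpow : p ^ k * p ^ (σ - k) = p ^ σ := by
    rw [← pow_add, Nat.add_sub_cancel' hk]
  have hexp : Real.exp (-(a * p)) * Real.exp (-(b * p)) = Real.exp (-((a + b) * p)) := by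
    rw [← Real.exp_add]; ring_nf
  have hk0 : ((Nat.factorial k : ℕ) : ℝ) ≠ 0 := Nat.cast_ne_zero.mpr (Nat.factorial_ne_zero k)
  have hk1 : ((Nat.factorial (σ - k) : ℕ) : ℝ) ≠ 0 :=
    Nat.cast_ne_zero.mpr (Nat.factorial_ne_zero _)
  have hk2 : ((Nat.factorial σ : ℕ) : ℝ) ≠ 0 := Nat.cast_ne_zero.mpr (Nat.factorial_ne_zero σ)
  have hc : ((σ.choose k : ℕ) : ℝ)
      = (Nat.factorial σ) / ((Nat.factorial k : ℝ) * (Nat.factorial (σ - k))) := by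
    rw [eq_div_iff (by positivity)]
    linear_combination hfac
  calc pp (a * p) k * pp (b * p) (σ - k)
      = Real.exp (-((a + b) * p)) * (a ^ k * b ^ (σ - k) * p ^ σ) /
          ((Nat.factorial k : ℝ) * (Nat.factorial (σ - k))) := by
        unfold pp
        rw [div_mul_div_comm]
        congr 1
        rw [mul_pow, mul_pow, ← hexp, ← hpow]
        ring
    _ = (Real.exp (-((a + b) * p)) * p ^ σ / (Nat.factorial σ)) *
          ((σ.choose k : ℝ) * a ^ k * b ^ (σ - k)) := by
        rw [hc]
        field_simp

theorem stmt_11 (m₁ m₂ p q : ℝ) (hm₁ : 0 < m₁) (hm₂ : 0 < m₂)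
    (hp : 0 < p) (hpq : p = q) (σ : ℕ) (hσ : 1 ≤ σ) :
    (∑ k ∈ Finset.range (σ + 1), pp (m₁ * p) k * pp (m₂ * q) (σ - k) *
        ((m₂ * k - m₁ * ((σ : ℝ) - k)) ^ 2 - (m₂ ^ 2 * k + m₁ ^ 2 * ((σ : ℝ) - k))) /
        (σ : ℝ)) /
      (∑ k ∈ Finset.range (σ + 1), pp (m₁ * p) k * pp (m₂ * q) (σ - k)) = 0 := by
  subst hpq
  have hnum : (∑ k ∈ Finset.range (σ + 1), pp (m₁ * p) k * pp (m₂ * p) (σ - k) *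
        ((m₂ * k - m₁ * ((σ : ℝ) - k)) ^ 2 - (m₂ ^ 2 * k + m₁ ^ 2 * ((σ : ℝ) - k))) /
        (σ : ℝ)) = 0 := by
    have e : ∀ k ∈ Finset.range (σ + 1),
        pp (m₁ * p) k * pp (m₂ * p) (σ - k) *
          ((m₂ * k - m₁ * ((σ : ℝ) - k)) ^ 2 - (m₂ ^ 2 * k + m₁ ^ 2 * ((σ : ℝ) - k))) / (σ : ℝ)
        = (Real.exp (-((m₁ + m₂) * p)) * p ^ σ / ((Nat.factorial σ : ℝ) * σ)) *
            ((σ.choose k : ℝ) * m₁ ^ k * m₂ ^ (σ - k) *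
              ((m₂ * k - m₁ * ((σ : ℝ) - k)) ^ 2 - (m₂ ^ 2 * k + m₁ ^ 2 * ((σ : ℝ) - k)))) := by
      intro k hk
      rw [pp_mul m₁ m₂ p σ k (Finset.mem_range_succ_iff.mp hk)]
      ring
    rw [Finset.sum_congr rfl e, ← Finset.mul_sum, sumf m₁ m₂ σ hσ, mul_zero]
  rw [hnum]
  exact zero_div _
end

section
/- Let p = q be a probability distribution on [n], m₁, m₂ > 0, and for each i ∈ A ⊆ [n] let X_i ~ Poisson(m₁p_i), Y_i ~ Poisson(m₂q_i) be independent. Then E[Σ_{i∈A} 𝟙{Y_i = 2}/(X_i + 1)] ≤ m₂²/(2 m₁). -/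
open scoped BigOperators
open Real

lemma real_exp_tsum (x : ℝ) : Real.exp x = ∑' n : ℕ, x ^ n / n.factorial := by
  rw [Real.exp_eq_exp_ℝ, NormedSpace.exp_eq_tsum_div]

lemma pp_nonneg (lam : ℝ) (k : ℕ) (h : 0 ≤ lam) : 0 ≤ pp lam k := by
  unfold pp
  positivity

/-- Key bound: for λ > 0, ∑' k, pp λ k / (k+1) ≤ 1/λ. -/
lemma key (lam : ℝ) (h : 0 < lam) : (∑' k : ℕ, pp lam k * (1 / ((k : ℝ) + 1))) ≤ 1 / lam := by
  have hterm : ∀ k : ℕ, pp lam k * (1 / ((k : ℝ) + 1))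
      = Real.exp (-lam) / lam * (lam ^ (k+1) / (k+1).factorial) := by
    intro k
    have hk : ((k : ℝ) + 1) ≠ 0 := by positivity
    unfold pp
    rw [Nat.factorial_succ]
    push_cast
    field_simp
    ring
  have hsum : Summable (fun k : ℕ => lam ^ (k+1) / ((k+1).factorial : ℝ)) :=
    (Real.summable_pow_div_factorial lam).comp_injective (add_left_injective 1)
  calc (∑' k : ℕ, pp lam k * (1 / ((k : ℝ) + 1)))
      = Real.exp (-lam) / lam * ∑' k : ℕ, (lam ^ (k+1) / ((k+1).factorial : ℝ)) := by
        rw [← tsum_mul_left]; exact tsum_congr hterm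
    _ ≤ Real.exp (-lam) / lam * Real.exp lam := by
        apply mul_le_mul_of_nonneg_left _ (by positivity)
        rw [real_exp_tsum]
        exact Summable.tsum_le_tsum_of_inj (fun k => k + 1) (add_left_injective 1)
          (fun a _ => by positivity) (fun k => le_rfl) hsum
          (Real.summable_pow_div_factorial lam)
    _ = 1 / lam := by
        rw [div_mul_eq_mul_div, ← Real.exp_add]
        simp

theorem stmt_13 (n : ℕ) (p q : Fin n → ℝ) (m₁ m₂ : ℝ) (hm₁ : 0 < m₁) (hm₂ : 0 < m₂)
    (hpq : p = q) (hp0 : ∀ i, 0 ≤ p i) (hp1 : ∑ i, p i = 1) (A : Finset (Fin n)) :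
    (∑ i ∈ A, ∑' k : ℕ, ∑' l : ℕ, pp (m₁ * p i) k * pp (m₂ * q i) l *
        (if l = 2 then 1 / ((k : ℝ) + 1) else 0)) ≤ m₂ ^ 2 / (2 * m₁) := by
  subst hpq
  have hmain : ∀ i ∈ A, (∑' k : ℕ, ∑' l : ℕ, pp (m₁ * p i) k * pp (m₂ * p i) l *
      (if l = 2 then 1 / ((k : ℝ) + 1) else 0)) ≤ m₂ ^ 2 / (2 * m₁) * p i := by
    intro i _
    have hpi := hp0 i
    have hinner : ∀ k : ℕ, (∑' l : ℕ, pp (m₁ * p i) k * pp (m₂ * p i) l *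
        (if l = 2 then 1 / ((k : ℝ) + 1) else 0))
        = pp (m₂ * p i) 2 * (pp (m₁ * p i) k * (1 / ((k : ℝ) + 1))) := by
      intro k
      rw [tsum_eq_single 2 (by intro l hl; simp [hl])]
      simp; ring
    rcases eq_or_lt_of_le hpi with hz | hpos
    · have : pp (m₂ * p i) 2 = 0 := by
        unfold pp; rw [← hz]; norm_num
      have h0 : (∑' k : ℕ, ∑' l : ℕ, pp (m₁ * p i) k * pp (m₂ * p i) l *
          (if l = 2 then 1 / ((k : ℝ) + 1) else 0)) = 0 := by
        rw [tsum_congr hinner]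
        simp [this]
      rw [h0, ← hz, mul_zero]
    · have hl1 : 0 < m₁ * p i := by positivity
      calc (∑' k : ℕ, ∑' l : ℕ, pp (m₁ * p i) k * pp (m₂ * p i) l *
              (if l = 2 then 1 / ((k : ℝ) + 1) else 0))
          = pp (m₂ * p i) 2 * ∑' k : ℕ, pp (m₁ * p i) k * (1 / ((k : ℝ) + 1)) := by
            rw [← tsum_mul_left]; exact tsum_congr hinner
        _ ≤ pp (m₂ * p i) 2 * (1 / (m₁ * p i)) := by
            apply mul_le_mul_of_nonneg_left (key _ hl1) (pp_nonneg _ _ (by positivity))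
        _ ≤ (m₂ * p i) ^ 2 / 2 * (1 / (m₁ * p i)) := by
            apply mul_le_mul_of_nonneg_right _ (by positivity)
            unfold pp
            have : Real.exp (-(m₂ * p i)) ≤ 1 := by
              rw [Real.exp_le_one_iff]; nlinarith
            calc Real.exp (-(m₂ * p i)) * (m₂ * p i) ^ 2 / (Nat.factorial 2 : ℝ)
                ≤ 1 * (m₂ * p i) ^ 2 / (Nat.factorial 2 : ℝ) := by
                  apply div_le_div_of_nonneg_right _ (by norm_num)
                  · exact mul_le_mul_of_nonneg_right this (by positivity)
              _ = (m₂ * p i) ^ 2 / 2 := by norm_num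
        _ = m₂ ^ 2 / (2 * m₁) * p i := by field_simp
  calc (∑ i ∈ A, ∑' k : ℕ, ∑' l : ℕ, pp (m₁ * p i) k * pp (m₂ * p i) l *
          (if l = 2 then 1 / ((k : ℝ) + 1) else 0))
      ≤ ∑ i ∈ A, m₂ ^ 2 / (2 * m₁) * p i := Finset.sum_le_sum hmain
    _ = m₂ ^ 2 / (2 * m₁) * ∑ i ∈ A, p i := by rw [Finset.mul_sum]
    _ ≤ m₂ ^ 2 / (2 * m₁) * 1 := by
        apply mul_le_mul_of_nonneg_left _ (by positivity)
        rw [← hp1]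
        exact Finset.sum_le_sum_of_subset_of_nonneg (Finset.subset_univ A)
          (fun i _ _ => hp0 i)
    _ = m₂ ^ 2 / (2 * m₁) := mul_one _
end

section
/- Let p, q be probability distributions on [n] with ‖p - q‖₁ ≤ ε/√n for some ε > 0 with ε²m₁ ≤ Cn, and suppose (without loss of generality) that for every i, q_i ≥ 2ε/√n implies p_i ≥ q_i/2. Then Σ_{i: q_i ≥ 2p_i} m₁ q_i² = O(ε² m₁ / n) = O(1), and consequently Σ_{i=1}^n min{q_i²/p_i, m₁ q_i²} = O(1). -/
open scoped BigOperators

theorem stmt_15 :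
    ∃ K : ℝ, 0 < K ∧
      ∀ (n : ℕ), 0 < n → ∀ (ε m₁ C : ℝ) (p q : Fin n → ℝ),
        0 < ε → 0 < m₁ → 0 < C →
        (∀ i, 0 ≤ p i) → (∀ i, 0 ≤ q i) →
        (∑ i, p i = 1) → (∑ i, q i = 1) →
        (∑ i, |p i - q i|) ≤ ε / Real.sqrt n →
        ε ^ 2 * m₁ ≤ C * n →
        (∀ i, 2 * ε / Real.sqrt n ≤ q i → q i / 2 ≤ p i) →
        (∑ i ∈ Finset.univ.filter (fun i => 2 * p i ≤ q i), m₁ * q i ^ 2 ≤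
            K * (ε ^ 2 * m₁ / n)) ∧
        (∑ i, min (q i ^ 2 / p i) (m₁ * q i ^ 2) ≤ K * (1 + C)) := by
  refine ⟨4, by norm_num, ?_⟩
  intro n hn ε m₁ C p q hε hm hC hp hq hps hqs hL1 hεm _hwlog
  have hn' : (0:ℝ) < n := by exact_mod_cast hn
  set s := Real.sqrt n with hs
  have hs0 : 0 < s := Real.sqrt_pos.mpr hn'
  have hs2 : s * s = n := Real.mul_self_sqrt hn'.le
  have habs : ∀ i, |p i - q i| ≤ ε / s := fun i =>
    le_trans (Finset.single_le_sum (f := fun i => |p i - q i|)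
      (fun j _ => abs_nonneg _) (Finset.mem_univ i)) hL1
  set S := Finset.univ.filter (fun i => 2 * p i ≤ q i) with hS
  have hqS : ∀ i ∈ S, q i ≤ 2 * (ε / s) := by
    intro i hi
    have h2 : 2 * p i ≤ q i := (Finset.mem_filter.mp hi).2
    have h3 := (abs_le.mp (habs i)).1
    have := hp i
    linarith
  have hsumS : ∑ i ∈ S, q i ≤ 2 * (ε / s) := by
    have h1 : ∑ i ∈ S, (q i - p i) ≤ ε / s := by
      calc ∑ i ∈ S, (q i - p i)
          ≤ ∑ i ∈ S, |p i - q i| :=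
            Finset.sum_le_sum (fun i _ => by
              rw [abs_sub_comm]; exact le_abs_self _)
        _ ≤ ∑ i, |p i - q i| :=
            Finset.sum_le_sum_of_subset_of_nonneg (Finset.subset_univ _)
              (fun i _ _ => abs_nonneg _)
        _ ≤ ε / s := hL1
    have h2 : ∑ i ∈ S, q i / 2 ≤ ∑ i ∈ S, (q i - p i) :=
      Finset.sum_le_sum (fun i hi => by
        have := (Finset.mem_filter.mp hi).2; linarith)
    rw [← Finset.sum_div] at h2
    linarith
  have hsq : ∑ i ∈ S, q i ^ 2 ≤ 4 * (ε ^ 2 / n) := by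
    have h1 : ∑ i ∈ S, q i ^ 2 ≤ ∑ i ∈ S, (2 * (ε / s)) * q i :=
      Finset.sum_le_sum (fun i hi => by
        have h1 := hqS i hi; have h2 := hq i; nlinarith)
    rw [← Finset.mul_sum] at h1
    have h2 : (2 * (ε / s)) * (∑ i ∈ S, q i) ≤ (2 * (ε / s)) * (2 * (ε / s)) :=
      mul_le_mul_of_nonneg_left hsumS (by positivity)
    have h3 : (2 * (ε / s)) * (2 * (ε / s)) = 4 * (ε ^ 2 / n) := by
      field_simp
      ring_nf
      nlinarith [hs2]
    linarith
  have hfirst : ∑ i ∈ S, m₁ * q i ^ 2 ≤ 4 * (ε ^ 2 * m₁ / n) := by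
    rw [← Finset.mul_sum]
    have := mul_le_mul_of_nonneg_left hsq hm.le
    calc m₁ * ∑ i ∈ S, q i ^ 2 ≤ m₁ * (4 * (ε ^ 2 / n)) := this
      _ = 4 * (ε ^ 2 * m₁ / n) := by ring
  refine ⟨hfirst, ?_⟩
  have hC' : ε ^ 2 * m₁ / n ≤ C := by rw [div_le_iff₀ hn']; linarith
  have hmin1 : ∑ i ∈ S, min (q i ^ 2 / p i) (m₁ * q i ^ 2) ≤ 4 * C := by
    calc ∑ i ∈ S, min (q i ^ 2 / p i) (m₁ * q i ^ 2)
        ≤ ∑ i ∈ S, m₁ * q i ^ 2 := Finset.sum_le_sum (fun i _ => min_le_right _ _)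
      _ ≤ 4 * (ε ^ 2 * m₁ / n) := hfirst
      _ ≤ 4 * C := by linarith
  have hmin2 : ∑ i ∈ Finset.univ.filter (fun i => ¬ (2 * p i ≤ q i)),
      min (q i ^ 2 / p i) (m₁ * q i ^ 2) ≤ 2 := by
    calc ∑ i ∈ Finset.univ.filter (fun i => ¬ (2 * p i ≤ q i)),
          min (q i ^ 2 / p i) (m₁ * q i ^ 2)
        ≤ ∑ i ∈ Finset.univ.filter (fun i => ¬ (2 * p i ≤ q i)), 2 * q i := by
          refine Finset.sum_le_sum (fun i hi => ?_)
          have h1 : q i < 2 * p i := lt_of_not_ge (Finset.mem_filter.mp hi).2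
          have h2 := hq i
          have hp0 : 0 < p i := by linarith
          refine le_trans (min_le_left _ _) ?_
          rw [div_le_iff₀ hp0]
          nlinarith
      _ ≤ ∑ i, 2 * q i :=
          Finset.sum_le_sum_of_subset_of_nonneg (Finset.subset_univ _)
            (fun i _ _ => by have := hq i; linarith)
      _ = 2 := by rw [← Finset.mul_sum, hqs, mul_one]
  have hsplit := Finset.sum_filter_add_sum_filter_not Finset.univ
    (fun i => 2 * p i ≤ q i) (fun i => min (q i ^ 2 / p i) (m₁ * q i ^ 2))
  rw [← hsplit]
  have : (4:ℝ) * C + 2 ≤ 4 * (1 + C) := by linarith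
  calc ∑ i ∈ S, min (q i ^ 2 / p i) (m₁ * q i ^ 2)
        + ∑ i ∈ Finset.univ.filter (fun i => ¬ (2 * p i ≤ q i)),
          min (q i ^ 2 / p i) (m₁ * q i ^ 2)
      ≤ 4 * C + 2 := add_le_add hmin1 hmin2
    _ ≤ 4 * (1 + C) := this
end
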